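/- arXiv:1407.1746 — 8 statements merged into one kernel-verified Lean document; each statement's English description precedes it below -/
import Mathlib

section
/- For every δ ∈ (0,1) there exists N₀ such that for every integer n′ ≥ N₀ the following holds. Set t = ⌊(log n′)^{1−δ}⌋, n = ⌊n′/t⌋ · t, β = ⌊log n⌋, α = (log n)³ (natural logarithms), and ε = max{ (1 − 2/β)^{−1} · (1 − β/α)^{−2t} − 1, (n/(n−1)) · (2α²/n²) · (2t)^{2t} }. Define w_k for k = 1, ..., n by w_β = (1+ε)n/((n−1)β); w_k = εt/(jn) if k = j·n/t for some j ∈ {1, ..., t}; and w_k = 0 otherwise. Then for all real numbers r_1, ..., r_t ∈ [1, n]: Σ_{k=1}^{n} w_k · (k − 2) · Π_{i=1}^{t} (r_i − k)² ≥ (1 + 1/(n−1)) · Π_{i=1}^{t} r_i². -/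
set_option maxHeartbeats 1000000
open Real Filter Finset
lemma stmt5_ev : ∀ᶠ (n' : ℕ) in atTop, 7 ≤ Real.log n' ∧ 3 * (Real.log n')^4 ≤ n' := by
  have h1 : Tendsto (fun n' : ℕ => Real.log n') atTop atTop :=
    Real.tendsto_log_atTop.comp tendsto_natCast_atTop_atTop
  have h2 : (fun x : ℝ => Real.log x ^ (4:ℝ)) =o[atTop] (fun x : ℝ => x ^ (1:ℝ)) :=
    isLittleO_log_rpow_rpow_atTop 4 one_pos
  have h3 := h2.bound (show (0:ℝ) < 1/3 by norm_num)
  filter_upwards [h1.eventually_ge_atTop 7,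
    (tendsto_natCast_atTop_atTop (R := ℝ)).eventually (h3.and (eventually_ge_atTop 1))] with n' hA hB
  refine ⟨hA, ?_⟩
  obtain ⟨hb, hx1⟩ := hB
  have hlog0 : (0:ℝ) ≤ Real.log n' := le_trans (by norm_num) hA
  rw [Real.norm_eq_abs, Real.norm_eq_abs, abs_of_nonneg (rpow_nonneg hlog0 _),
    abs_of_nonneg (rpow_nonneg (by linarith) _), Real.rpow_one,
    show (4:ℝ) = ((4:ℕ):ℝ) by norm_num, Real.rpow_natCast] at hb
  linarith

/-- root-form inequality for the Min-Knapsack SoS solution: for all roots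
`r_1, ..., r_t ∈ [1, n]`, `Σ_k w_k (k-2) Π (r_i-k)² ≥ (1 + 1/(n-1)) Π r_i²`. -/
theorem stmt5 (δ : ℝ) (hδ0 : 0 < δ) (hδ1 : δ < 1) :
    ∃ N₀ : ℕ, ∀ n' : ℕ, N₀ ≤ n' →
    ∀ t n β : ℕ, ∀ A ε : ℝ,
    t = ⌊(Real.log n') ^ (1 - δ)⌋₊ →
    n = (n' / t) * t →
    β = ⌊Real.log n⌋₊ →
    A = (Real.log n) ^ 3 →
    ε = max ((1 - 2 / (β : ℝ))⁻¹ * ((1 - (β : ℝ) / A) ^ (2 * t))⁻¹ - 1)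
          (((n : ℝ) / ((n : ℝ) - 1)) * (2 * A ^ 2 / (n : ℝ) ^ 2) * (2 * (t : ℝ)) ^ (2 * t)) →
    ∀ w : ℕ → ℝ,
    (∀ k : ℕ, w k = if k = β then (1 + ε) * (n : ℝ) / (((n : ℝ) - 1) * (β : ℝ))
        else if k ≠ 0 ∧ (n / t) ∣ k then ε * (t : ℝ) / (((k / (n / t) : ℕ) : ℝ) * (n : ℝ))
        else 0) →
    ∀ r : Fin t → ℝ, (∀ i : Fin t, 1 ≤ r i ∧ r i ≤ (n : ℝ)) →
      (1 + 1 / ((n : ℝ) - 1)) * ∏ i : Fin t, (r i) ^ 2 ≤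
        ∑ k ∈ Finset.Icc 1 n, w k * ((k : ℝ) - 2) * ∏ i : Fin t, (r i - (k : ℝ)) ^ 2 := by
  obtain ⟨N₀, hN₀⟩ := eventually_atTop.mp stmt5_ev
  refine ⟨N₀, ?_⟩
  intro n' hn' t n β A ε ht hn hβ hA hε w hw r hr
  obtain ⟨hL7, hL4⟩ := hN₀ n' hn'
  set L := Real.log n' with hL
  have hL1 : (1:ℝ) ≤ L := by linarith
  have hL0 : (0:ℝ) < L := by linarith
  -- t bounds
  have ht1 : 1 ≤ t := by
    rw [ht]
    have : (1:ℝ) ≤ L ^ (1 - δ) := by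
      calc (1:ℝ) = L ^ (0:ℝ) := (Real.rpow_zero L).symm
      _ ≤ L ^ (1 - δ) := Real.rpow_le_rpow_of_exponent_le hL1 (by linarith)
    exact Nat.le_floor (by exact_mod_cast this)
  have htpos : 0 < t := ht1
  have ht0R : (0:ℝ) < t := by exact_mod_cast htpos
  have htL : (t:ℝ) ≤ L := by
    rw [ht]
    calc ((⌊L ^ (1-δ)⌋₊ : ℕ):ℝ) ≤ L ^ (1-δ) := Nat.floor_le (Real.rpow_nonneg hL0.le _)
    _ ≤ L ^ (1:ℝ) := Real.rpow_le_rpow_of_exponent_le hL1 (by linarith)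
    _ = L := Real.rpow_one L
  -- power facts about L
  have hL2 : (49:ℝ) ≤ L^2 := by
    have := pow_le_pow_left₀ (by norm_num : (0:ℝ) ≤ 7) hL7 2
    norm_num at this; linarith
  have hL3a : (343:ℝ) ≤ L^3 := by
    have := pow_le_pow_left₀ (by norm_num : (0:ℝ) ≤ 7) hL7 3
    norm_num at this; linarith
  have hL74 : (2401:ℝ) ≤ L^4 := by
    have := pow_le_pow_left₀ (by norm_num : (0:ℝ) ≤ 7) hL7 4
    norm_num at this; linarith
  have hL4L : L ≤ L^4 := le_self_pow₀ hL1 (by norm_num)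
  have h49L : 49*L ≤ L^3 := by
    calc 49*L ≤ L^2*L := mul_le_mul_of_nonneg_right hL2 hL0.le
    _ = L^3 := by ring
  -- n bounds
  have hnn' : n ≤ n' := by rw [hn]; exact Nat.div_mul_le_self n' t
  have hnlow : (n':ℝ) - L ≤ (n:ℝ) := by
    have hmod : n + n' % t = n' := by rw [hn]; exact Nat.div_add_mod' n' t
    have hmlt : n' % t < t := Nat.mod_lt _ htpos
    have : ((n' % t : ℕ):ℝ) ≤ L := le_trans (by exact_mod_cast hmlt.le) htL
    have h2 : (n:ℝ) + (n' % t : ℕ) = n' := by exact_mod_cast hmod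
    linarith
  have hn'3L4 : 3 * L^4 ≤ (n':ℝ) := hL4
  have hnhalf : (n':ℝ) / 2 ≤ n := by linarith
  have hn3601 : (3601:ℝ) ≤ n := by linarith
  have hnposR : (0:ℝ) < n := by linarith
  have hnpos : 0 < n := by exact_mod_cast hnposR
  have hn1 : (1:ℝ) < n := by linarith
  -- log n bounds
  have hlogn3 : (3:ℝ) ≤ Real.log n := by
    rw [Real.le_log_iff_exp_le hnposR]
    have h1 := Real.exp_one_lt_d9
    have h2 : Real.exp 3 = Real.exp 1 ^ (3:ℕ) := by
      rw [← Real.exp_nat_mul]; norm_num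
    have h3 : Real.exp 1 ^ (3:ℕ) ≤ (2.7182818286:ℝ) ^ (3:ℕ) :=
      pow_le_pow_left₀ (Real.exp_pos 1).le h1.le 3
    have h4 : (2.7182818286:ℝ) ^ (3:ℕ) ≤ 21 := by norm_num
    rw [h2]; linarith
  have hlognL : Real.log n ≤ L := Real.log_le_log hnposR (by exact_mod_cast hnn')
  have hApos : (0:ℝ) < A := by rw [hA]; positivity
  have hA27 : (27:ℝ) ≤ A := by
    rw [hA]
    have := pow_le_pow_left₀ (by norm_num : (0:ℝ) ≤ 3) hlogn3 3
    norm_num at this; linarith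
  have hAL3 : A ≤ L^3 := by
    rw [hA]
    exact pow_le_pow_left₀ (by linarith) hlognL 3
  -- β bounds
  have hβ3 : 3 ≤ β := by rw [hβ]; exact Nat.le_floor (by exact_mod_cast hlogn3)
  have hβ3R : (3:ℝ) ≤ β := by exact_mod_cast hβ3
  have hβlog : (β:ℝ) ≤ Real.log n := by rw [hβ]; exact Nat.floor_le (by linarith)
  have h9βA : 9 * (β:ℝ) ≤ A := by
    have h2 : (9:ℝ) ≤ (Real.log n)^2 := by
      have := pow_le_pow_left₀ (by norm_num : (0:ℝ) ≤ 3) hlogn3 2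
      norm_num at this; linarith
    have h3 : 9 * Real.log n ≤ (Real.log n)^3 := by
      calc 9 * Real.log n ≤ (Real.log n)^2 * Real.log n :=
        mul_le_mul_of_nonneg_right h2 (by linarith)
      _ = (Real.log n)^3 := by ring
    rw [hA]; linarith
  -- m := n / t
  set m : ℕ := n / t with hm
  have htdvd : t ∣ n := ⟨n' / t, by rw [hn]; ring⟩
  have hmtn : m * t = n := Nat.div_mul_cancel htdvd
  have hmtnR : (m:ℝ) * t = n := by exact_mod_cast hmtn
  have hmn't : m = n' / t := by rw [hm, hn, Nat.mul_div_cancel _ htpos]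
  have hmlow : 3 * L^3 - 1 ≤ (m:ℝ) := by
    have hmod : m * t + n' % t = n' := by rw [hmn't]; exact Nat.div_add_mod' n' t
    have h2 : (m:ℝ) * t + (n' % t : ℕ) = n' := by exact_mod_cast hmod
    have hmlt : ((n' % t : ℕ):ℝ) ≤ L :=
      le_trans (by exact_mod_cast (Nat.mod_lt _ htpos).le) htL
    have hmt : (n':ℝ) - L ≤ (m:ℝ) * t := by linarith
    have hmL : (m:ℝ) * t ≤ m * L := mul_le_mul_of_nonneg_left htL (Nat.cast_nonneg m)
    have hkey : (3 * L^3 - 1) * L ≤ (m:ℝ) * L := by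
      have : (3*L^3-1)*L = 3*L^4 - L := by ring
      linarith
    exact le_of_mul_le_mul_right hkey hL0
  have h2Am : 2 * A ≤ (m:ℝ) := by linarith
  have hm54 : (54:ℝ) ≤ m := by linarith
  have hβm : β < m := by
    have : (β:ℝ) < m := by linarith
    exact_mod_cast this
  have hn4t : 4 * (t:ℝ) ≤ n := by
    have : 4 * (t:ℝ) ≤ (m:ℝ) * t := mul_le_mul_of_nonneg_right (by linarith) ht0R.le
    linarith
  have hε0 : 0 ≤ ε := by
    have h2 : (0:ℝ) < ((n : ℝ) / ((n : ℝ) - 1)) * (2 * A ^ 2 / (n : ℝ) ^ 2) * (2 * (t : ℝ)) ^ (2 * t) := by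
      have h1 : (0:ℝ) < (n:ℝ) - 1 := by linarith
      positivity
    rw [hε]
    exact le_trans h2.le (le_max_right _ _)
  -- nonnegativity of summands
  have hsum_nonneg : ∀ k ∈ Finset.Icc 1 n,
      0 ≤ w k * ((k : ℝ) - 2) * ∏ i : Fin t, (r i - (k : ℝ)) ^ 2 := by
    intro k hk
    rw [hw k]
    split_ifs with h1 h2
    · subst h1
      have hβ2 : (0:ℝ) ≤ (k:ℝ) - 2 := by
        have : (3:ℝ) ≤ k := by exact_mod_cast hβ3
        linarith
      refine mul_nonneg (mul_nonneg ?_ hβ2) (Finset.prod_nonneg fun i _ => sq_nonneg _)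
      have h1 : (0:ℝ) < (n:ℝ) - 1 := by linarith
      have h2 : (0:ℝ) < (k:ℝ) := by linarith
      positivity
    · obtain ⟨hk0, hdvd⟩ := h2
      have hkm : m ≤ k := Nat.le_of_dvd (Nat.pos_of_ne_zero hk0) hdvd
      have hk2 : (0:ℝ) ≤ (k:ℝ) - 2 := by
        have : (m:ℝ) ≤ k := by exact_mod_cast hkm
        linarith
      refine mul_nonneg (mul_nonneg ?_ hk2) (Finset.prod_nonneg fun i _ => sq_nonneg _)
      have : (0:ℝ) ≤ ((k / m : ℕ):ℝ) * n := by positivity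
      positivity
    · simp
  have hne1 : ((n:ℝ) - 1) ≠ 0 := by linarith
  have hLHS : 1 + 1 / ((n:ℝ) - 1) = (n:ℝ) / ((n:ℝ) - 1) := by
    field_simp
    ring
  set P : ℝ := ∏ i : Fin t, (r i) ^ 2 with hP
  have hPnonneg : 0 ≤ P := Finset.prod_nonneg fun i _ => sq_nonneg _
  rw [hLHS]
  by_cases hAll : ∀ i, A ≤ r i
  · -- Case 1: all roots large; use the k = β term
    have hβmem : β ∈ Finset.Icc 1 n := by
      refine Finset.mem_Icc.mpr ⟨by omega, ?_⟩
      have h1 : (β:ℝ) ≤ (n:ℝ) := le_trans hβlog (Real.log_le_self hnposR.le)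
      exact_mod_cast h1
    refine le_trans ?_ (Finset.single_le_sum hsum_nonneg hβmem)
    rw [hw β, if_pos rfl]
    set c : ℝ := (1 - (β:ℝ)/A) ^ (2*t) with hc
    have hbase : (8:ℝ)/9 ≤ 1 - (β:ℝ)/A := by
      have h1 : (β:ℝ)/A ≤ 1/9 := by
        rw [div_le_div_iff₀ hApos (by norm_num)]
        linarith
      linarith
    have hcpos : (0:ℝ) < c := pow_pos (by linarith) _
    have hQ : c * P ≤ ∏ i : Fin t, (r i - (β:ℝ)) ^ 2 := by
      have hfac : ∀ i ∈ Finset.univ (α := Fin t),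
          (1 - (β:ℝ)/A)^2 * (r i)^2 ≤ (r i - (β:ℝ))^2 := by
        intro i _
        have hri := (hr i).1
        have hriA := hAll i
        have h1 : (1 - (β:ℝ)/A) * r i ≤ r i - β := by
          have h2 : (β:ℝ) ≤ (β/A) * r i := by
            rw [div_mul_eq_mul_div, le_div_iff₀ hApos]
            have : (β:ℝ) * A ≤ β * r i := by
              apply mul_le_mul_of_nonneg_left hriA (by linarith)
            linarith
          have : (1 - (β:ℝ)/A) * r i = r i - (β/A) * r i := by ring
          linarith
        have h0 : 0 ≤ (1 - (β:ℝ)/A) * r i := by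
          apply mul_nonneg (by linarith) (by linarith)
        calc (1 - (β:ℝ)/A)^2 * (r i)^2 = ((1 - (β:ℝ)/A) * r i)^2 := by ring
        _ ≤ (r i - (β:ℝ))^2 := pow_le_pow_left₀ h0 h1 2
      calc c * P = ∏ i : Fin t, ((1 - (β:ℝ)/A)^2 * (r i)^2) := by
            rw [Finset.prod_mul_distrib, Finset.prod_const, hP]
            congr 1
            rw [Finset.card_univ, Fintype.card_fin, hc, pow_mul]
      _ ≤ ∏ i : Fin t, (r i - (β:ℝ))^2 := Finset.prod_le_prod
            (fun i _ => by positivity) hfac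
    have h2β : (0:ℝ) < 1 - 2/(β:ℝ) := by
      have : 2/(β:ℝ) ≤ 2/3 := by
        apply div_le_div_of_nonneg_left (by norm_num) (by norm_num) hβ3R
      linarith
    have h1ε : ((1 - 2/(β:ℝ)) * c)⁻¹ ≤ 1 + ε := by
      have := le_max_left ((1 - 2 / (β : ℝ))⁻¹ * ((1 - (β : ℝ) / A) ^ (2 * t))⁻¹ - 1)
          (((n : ℝ) / ((n : ℝ) - 1)) * (2 * A ^ 2 / (n : ℝ) ^ 2) * (2 * (t : ℝ)) ^ (2 * t))
      rw [← hε] at this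
      rw [mul_inv]
      linarith
    have hfinal : 1 ≤ (1 + ε) * ((1 - 2/(β:ℝ)) * c) := by
      have hpos : (0:ℝ) < (1 - 2/(β:ℝ)) * c := mul_pos h2β hcpos
      have h2 := mul_le_mul_of_nonneg_right h1ε hpos.le
      rwa [inv_mul_cancel₀ hpos.ne'] at h2
    have hε1pos : (0:ℝ) ≤ 1 + ε := by linarith
    calc (n:ℝ) / (n - 1) * P = 1 * ((n:ℝ)/(n-1) * P) := by ring
    _ ≤ ((1 + ε) * ((1 - 2/(β:ℝ)) * c)) * ((n:ℝ)/(n-1) * P) := by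
        apply mul_le_mul_of_nonneg_right hfinal
        exact mul_nonneg (div_nonneg (by linarith) (by linarith)) hPnonneg
    _ = (1 + ε) * (n:ℝ) / (((n:ℝ)-1) * β) * ((β:ℝ) - 2) * (c * P) := by
        have hβ0 : (β:ℝ) ≠ 0 := by linarith
        field_simp
    _ ≤ (1 + ε) * (n:ℝ) / (((n:ℝ)-1) * β) * ((β:ℝ) - 2) * ∏ i : Fin t, (r i - (β:ℝ))^2 := by
        have hX : 0 ≤ (1 + ε) * (n:ℝ) / (((n:ℝ)-1) * (β:ℝ)) * ((β:ℝ) - 2) := by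
          apply mul_nonneg _ (by linarith)
          exact div_nonneg (mul_nonneg hε1pos (by linarith))
            (mul_nonneg (by linarith) (by linarith))
        exact mul_le_mul_of_nonneg_left hQ hX
  · -- Case 2: some root is small
    push_neg at hAll
    obtain ⟨i0, hi0⟩ := hAll
    have hm0R : (0:ℝ) < m := by linarith
    have hm0 : 0 < m := by exact_mod_cast hm0R
    -- pigeonhole: find j ∈ [1,t] with all roots far from j*m
    set J : Fin t → ℕ := fun i => ⌊r i / (m:ℝ) + 1/2⌋₊ with hJ
    have hcard : ((Finset.univ.erase i0).image J).card < (Finset.Icc 1 t).card := by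
      have h1 : ((Finset.univ.erase i0).image J).card ≤ (Finset.univ.erase i0).card :=
        Finset.card_image_le
      have h2 : (Finset.univ.erase i0).card = t - 1 := by
        rw [Finset.card_erase_of_mem (Finset.mem_univ i0), Finset.card_univ, Fintype.card_fin]
      rw [Nat.card_Icc]
      omega
    obtain ⟨j, hjmem, hjim⟩ := Finset.not_subset.mp
      (fun hsub => absurd (Finset.card_le_card hsub) (not_le.mpr hcard))
    obtain ⟨hj1, hjt⟩ := Finset.mem_Icc.mp hjmem
    have hj1R : (1:ℝ) ≤ j := by exact_mod_cast hj1
    have hjtR : (j:ℝ) ≤ t := by exact_mod_cast hjt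
    set K : ℕ := j * m with hK
    have hKcast : (K:ℝ) = (j:ℝ) * m := by rw [hK]; push_cast; ring
    have hmK : m ≤ K := Nat.le_mul_of_pos_left m hj1
    have hKmem : K ∈ Finset.Icc 1 n := by
      refine Finset.mem_Icc.mpr ⟨by omega, ?_⟩
      calc K = j * m := hK
      _ ≤ t * m := Nat.mul_le_mul_right m hjt
      _ = n := by rw [Nat.mul_comm]; exact hmtn
    have hKβ : K ≠ β := by omega
    have hK0 : K ≠ 0 := by omega
    have hKdiv : K / m = j := by rw [hK]; exact Nat.mul_div_cancel j hm0
    refine le_trans ?_ (Finset.single_le_sum hsum_nonneg hKmem)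
    rw [hw K, if_neg hKβ, if_pos ⟨hK0, ⟨j, by rw [hK, Nat.mul_comm]⟩⟩, hKdiv, hKcast]
    -- far property
    have hfar : ∀ i : Fin t, i ≠ i0 → (m:ℝ)/2 ≤ |r i - (j:ℝ)*(m:ℝ)| := by
      intro i hi
      by_contra hcon
      push_neg at hcon
      obtain ⟨ha1, ha2⟩ := abs_lt.mp hcon
      have hri := (hr i).1
      have hJij : J i = j := by
        have h0 : (0:ℝ) ≤ r i / m + 1/2 := by positivity
        rw [hJ]
        simp only []
        rw [Nat.floor_eq_iff h0]
        have he1 : ((j:ℝ) - 1/2) * m = j*m - m/2 := by ring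
        have he2 : ((j:ℝ) + 1/2) * m = j*m + m/2 := by ring
        constructor
        · have : (j:ℝ) - 1/2 < r i / m := by
            rw [lt_div_iff₀ hm0R]; linarith
          linarith
        · have : r i / m < (j:ℝ) + 1/2 := by
            rw [div_lt_iff₀ hm0R]; linarith
          push_cast
          linarith
      exact hjim (Finset.mem_image.mpr ⟨i, Finset.mem_erase.mpr ⟨hi, Finset.mem_univ i⟩, hJij⟩)
    -- product lower bound
    set D : ℝ := ((m:ℝ)/(2*A))^2 * (((2*(t:ℝ))^2)⁻¹) ^ (t-1) with hD
    have h2t0 : (0:ℝ) < 2*(t:ℝ) := by linarith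
    set g : Fin t → ℝ := fun i => if i = i0 then ((m:ℝ)/(2*A) * r i)^2 else (r i/(2*(t:ℝ)))^2
      with hg
    have hgle : ∀ i ∈ Finset.univ (α := Fin t), g i ≤ (r i - (j:ℝ)*m)^2 := by
      intro i _
      by_cases hii : i = i0
      · subst hii
        have hri := (hr i).1
        have h1 : (m:ℝ)/(2*A) * r i ≤ (m:ℝ)/2 := by
          have := mul_le_mul_of_nonneg_left hi0.le
            (div_nonneg hm0R.le (by linarith) : (0:ℝ) ≤ (m:ℝ)/(2*A))
          calc (m:ℝ)/(2*A) * r i ≤ (m:ℝ)/(2*A) * A := this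
          _ = (m:ℝ)/2 := by field_simp
        have h2 : (m:ℝ)/2 ≤ (j:ℝ)*m - r i := by
          have hjm : (m:ℝ) ≤ (j:ℝ)*m := le_mul_of_one_le_left hm0R.le hj1R
          linarith
        have h0 : (0:ℝ) ≤ (m:ℝ)/(2*A) * r i := by positivity
        have h3 : ((m:ℝ)/(2*A) * r i)^2 ≤ ((j:ℝ)*m - r i)^2 :=
          pow_le_pow_left₀ h0 (by linarith) 2
        calc g i = ((m:ℝ)/(2*A) * r i)^2 := by rw [hg]; simp
        _ ≤ ((j:ℝ)*m - r i)^2 := h3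
        _ = (r i - (j:ℝ)*m)^2 := by ring
      · have hri2 := (hr i).2
        have hri1 := (hr i).1
        have h1 : r i/(2*(t:ℝ)) ≤ (m:ℝ)/2 := by
          rw [div_le_div_iff₀ h2t0 (by norm_num)]
          calc r i * 2 ≤ (n:ℝ) * 2 := by linarith
          _ = (m:ℝ) * (2*t) := by rw [← hmtnR]; ring
        have h2 : (m:ℝ)/2 ≤ |r i - (j:ℝ)*m| := hfar i hii
        have h0 : (0:ℝ) ≤ r i/(2*(t:ℝ)) := by positivity
        calc g i = (r i/(2*(t:ℝ)))^2 := by rw [hg]; simp [hii]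
        _ ≤ |r i - (j:ℝ)*m|^2 := pow_le_pow_left₀ h0 (by linarith) 2
        _ = (r i - (j:ℝ)*m)^2 := sq_abs _
    have hprodg : ∏ i : Fin t, g i = D * P := by
      rw [← Finset.mul_prod_erase Finset.univ g (Finset.mem_univ i0)]
      have hP' : P = (r i0)^2 * ∏ i ∈ Finset.univ.erase i0, (r i)^2 := by
        rw [hP, ← Finset.mul_prod_erase Finset.univ _ (Finset.mem_univ i0)]
      have hg0 : g i0 = ((m:ℝ)/(2*A) * r i0)^2 := by rw [hg]; simp
      have hgerase : ∏ i ∈ Finset.univ.erase i0, g i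
          = (((2*(t:ℝ))^2)⁻¹) ^ (t-1) * ∏ i ∈ Finset.univ.erase i0, (r i)^2 := by
        have hcongr : ∀ i ∈ Finset.univ.erase i0, g i = ((2*(t:ℝ))^2)⁻¹ * (r i)^2 := by
          intro i hi
          have hii : i ≠ i0 := (Finset.mem_erase.mp hi).1
          show (if i = i0 then ((m:ℝ)/(2*A) * r i)^2 else (r i/(2*(t:ℝ)))^2)
            = ((2*(t:ℝ))^2)⁻¹ * (r i)^2
          rw [if_neg hii, div_pow, div_eq_mul_inv, mul_comm]
        rw [Finset.prod_congr rfl hcongr, Finset.prod_mul_distrib, Finset.prod_const,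
          Finset.card_erase_of_mem (Finset.mem_univ i0), Finset.card_univ, Fintype.card_fin]
      rw [hg0, hgerase, hP', hD]
      ring
    have hprodlow : D * P ≤ ∏ i : Fin t, (r i - (j:ℝ)*m)^2 := by
      rw [← hprodg]
      exact Finset.prod_le_prod (fun i _ => by
        rw [hg]; dsimp only; split_ifs <;> positivity) hgle
    -- coefficient bound
    have hjn0 : (0:ℝ) < (j:ℝ)*n := by positivity
    have hcoef : (1:ℝ)/2 ≤ (t:ℝ)/((j:ℝ)*n) * ((j:ℝ)*m - 2) := by
      rw [div_mul_eq_mul_div, le_div_iff₀ hjn0]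
      have h54jm : (54:ℝ) ≤ (j:ℝ)*m := le_trans hm54 (le_mul_of_one_le_left hm0R.le hj1R)
      have ht54 : 54*(t:ℝ) ≤ ((j:ℝ)*m)*t :=
        mul_le_mul_of_nonneg_right h54jm ht0R.le
      have hexp : (t:ℝ) * ((j:ℝ)*m - 2) = ((j:ℝ)*m)*t - 2*t := by ring
      have hexp2 : (1:ℝ)/2 * ((j:ℝ)*n) = (((j:ℝ)*m)*t)/2 := by
        rw [← hmtnR]; ring
      linarith
    have hcoef0 : (0:ℝ) ≤ (t:ℝ)/((j:ℝ)*n) * ((j:ℝ)*m - 2) := by linarith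
    -- the E bound
    set E : ℝ := ((n : ℝ) / ((n : ℝ) - 1)) * (2 * A ^ 2 / (n : ℝ) ^ 2) * (2 * (t : ℝ)) ^ (2 * t)
      with hE
    have hEε : E ≤ ε := by rw [hε, hE]; exact le_max_right _ _
    have hE0 : (0:ℝ) ≤ E := by
      rw [hE]
      have : (0:ℝ) < (n:ℝ) - 1 := by linarith
      positivity
    have hED : E * (1/2) * D = (n:ℝ)/((n:ℝ)-1) := by
      rw [hE, hD]
      have hsplit : (2*(t:ℝ))^(2*t) = ((2*(t:ℝ))^2)^(t-1) * (2*(t:ℝ))^2 := by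
        rw [← pow_mul, ← pow_add]
        congr 1
        omega
      rw [hsplit, ← hmtnR, inv_pow]
      have h2t : (2*(t:ℝ)) ≠ 0 := by linarith
      have hu : ((2*(t:ℝ))^2)^(t-1) ≠ 0 := by positivity
      have hA0 : A ≠ 0 := by linarith
      have hmt1 : (m:ℝ)*t - 1 ≠ 0 := by
        have : (1:ℝ) < (m:ℝ)*t := by rw [hmtnR]; exact hn1
        linarith
      have hmt0 : (m:ℝ)*t ≠ 0 := by
        have : (0:ℝ) < (m:ℝ)*t := by rw [hmtnR]; exact hnposR
        linarith
      field_simp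
    calc (n:ℝ)/((n:ℝ)-1) * P = (E * (1/2)) * (D * P) := by rw [← hED]; ring
    _ ≤ (ε * ((t:ℝ)/((j:ℝ)*n) * ((j:ℝ)*m - 2))) * ∏ i : Fin t, (r i - (j:ℝ)*m)^2 := by
        apply mul_le_mul ?_ hprodlow ?_ ?_
        · exact mul_le_mul hEε hcoef (by norm_num) hε0
        · have hD0 : (0:ℝ) ≤ D := by rw [hD]; positivity
          exact mul_nonneg hD0 hPnonneg
        · exact mul_nonneg hε0 hcoef0
    _ = ε * (t:ℝ) / ((j:ℝ)*n) * ((j:ℝ)*m - 2) * ∏ i : Fin t, (r i - (j:ℝ)*m)^2 := by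
        ring
end

section
/- Fix δ ∈ (0,1). For each integer n′ ≥ 3 set t(n′) = ⌊(log n′)^{1−δ}⌋, n(n′) = ⌊n′/t(n′)⌋ · t(n′), β = ⌊log n⌋, α = (log n)³ (natural logarithms), and ε(n′) = max{ (1 − 2/β)^{−1} · (1 − β/α)^{−2t} − 1, (n/(n−1)) · (2α²/n²) · (2t)^{2t} }. Then ε(n′) · t(n′) → 0 as n′ → ∞; in other words, ε = o(t^{−1}). -/
open Filter Real

lemma inv_aux {u : ℝ} (h0 : 0 ≤ u) (h : u ≤ 1/2) : (1-u)⁻¹ ≤ 1 + 2*u := by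
  rw [← one_div, div_le_iff₀ (by linarith)]
  nlinarith

set_option maxHeartbeats 1000000 in
lemma key (δ : ℝ) (hδ0 : 0 < δ) (hδ1 : δ < 1) (n' t n β : ℕ) (A : ℝ)
    (ht : t = ⌊(Real.log n') ^ (1 - δ)⌋₊) (hn : n = (n' / t) * t)
    (hβ : β = ⌊Real.log n⌋₊) (hA : A = (Real.log n) ^ 3)
    (h1 : (10^10 : ℝ) ≤ Real.log n') (h2 : 16/δ ≤ (Real.log n') ^ (δ/2))
    (h3 : (16:ℝ) ≤ n') :
    0 ≤ (max ((1 - 2 / (β : ℝ))⁻¹ * ((1 - (β : ℝ) / A) ^ (2 * t))⁻¹ - 1)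
          (((n : ℝ) / ((n : ℝ) - 1)) * (2 * A ^ 2 / (n : ℝ) ^ 2) * (2 * (t : ℝ)) ^ (2 * t))) * (t:ℝ)
    ∧ (max ((1 - 2 / (β : ℝ))⁻¹ * ((1 - (β : ℝ) / A) ^ (2 * t))⁻¹ - 1)
          (((n : ℝ) / ((n : ℝ) - 1)) * (2 * A ^ 2 / (n : ℝ) ^ 2) * (2 * (t : ℝ)) ^ (2 * t))) * (t:ℝ)
      ≤ 8 * Real.log n' ^ (-δ) + 64 * Real.log n' ^ (-(2*δ)) + 16 * ((n':ℝ))⁻¹ := by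
  set L := Real.log n' with hLdef
  have hn'0 : (0:ℝ) < n' := by linarith
  have hL0 : (0:ℝ) < L := by linarith
  have hL1 : (1:ℝ) ≤ L := by linarith
  have h1δ : (0:ℝ) < 1 - δ := by linarith
  -- t bounds
  have htre : (t:ℝ) ≤ L ^ (1-δ) := by rw [ht]; exact Nat.floor_le (by positivity)
  have hLre1 : (1:ℝ) ≤ L ^ (1-δ) := by
    have := Real.rpow_le_rpow_of_exponent_le hL1 (by linarith : (0:ℝ) ≤ 1-δ)
    simpa using this
  have ht1 : 1 ≤ t := by rw [ht]; exact Nat.le_floor (by exact_mod_cast hLre1)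
  have ht0 : (0:ℝ) < t := by exact_mod_cast ht1
  have hpow_le : L ^ (1-δ) ≤ L := by
    calc L ^ (1-δ) ≤ L ^ (1:ℝ) := Real.rpow_le_rpow_of_exponent_le hL1 (by linarith)
      _ = L := Real.rpow_one L
  have htL : (t:ℝ) ≤ L := htre.trans hpow_le
  -- L ≤ n'/2
  have hLn' : L ≤ (n':ℝ)/2 := by
    have hs0 : (0:ℝ) < Real.sqrt n' := Real.sqrt_pos.mpr hn'0
    have hs := Real.sq_sqrt hn'0.le
    have hs4 : (4:ℝ) ≤ Real.sqrt n' := by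
      rw [show (4:ℝ) = Real.sqrt 16 by
        rw [show (16:ℝ) = 4^2 by norm_num, Real.sqrt_sq (by norm_num)]]
      exact Real.sqrt_le_sqrt h3
    have hls : Real.log (Real.sqrt n') ≤ Real.sqrt n' - 1 := Real.log_le_sub_one_of_pos hs0
    have hlog : L = 2 * Real.log (Real.sqrt n') := by
      rw [Real.log_sqrt hn'0.le]; ring
    have h4s : 4 * Real.sqrt n' ≤ (n':ℝ) := by
      have := mul_le_mul_of_nonneg_right hs4 hs0.le
      nlinarith [hs]
    linarith
  -- n bounds
  have hnn' : n ≤ n' := by rw [hn]; exact Nat.div_mul_le_self n' t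
  have hnln' : (n:ℝ) ≤ n' := by exact_mod_cast hnn'
  have hn_lower : (n':ℝ) - (t:ℝ) ≤ n := by
    have hmod : n' % t < t := Nat.mod_lt _ (by omega)
    have hadd : n' % t + n = n' := by rw [hn]; exact Nat.mod_add_div' n' t
    have : ((n' % t : ℕ):ℝ) + (n:ℝ) = n' := by exact_mod_cast hadd
    have : ((n' % t : ℕ):ℝ) < t := by exact_mod_cast hmod
    linarith
  have hn_half : (n':ℝ)/2 ≤ n := by linarith
  have hn8 : (8:ℝ) ≤ n := by linarith
  have hn0 : (0:ℝ) < n := by linarith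
  -- log n bounds
  set l := Real.log n with hldef
  have hl_le : l ≤ L := Real.log_le_log hn0 hnln'
  have hl_ge : L - 1 ≤ l := by
    have h2' : Real.log ((n':ℝ)/2) ≤ l := Real.log_le_log (by linarith) hn_half
    have : Real.log ((n':ℝ)/2) = L - Real.log 2 := by
      rw [Real.log_div hn'0.ne' (by norm_num)]
    have hlog2 : Real.log 2 ≤ 1 := by
      have := Real.log_two_lt_d9; linarith
    linarith
  have hl0 : (0:ℝ) < l := by linarith
  have hlL2 : L/2 ≤ l := by linarith
  -- β bounds
  have hβ_le : (β:ℝ) ≤ l := by rw [hβ]; exact Nat.floor_le hl0.le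
  have hβ_ge : l - 1 ≤ (β:ℝ) := by
    rw [hβ]; exact (Nat.sub_one_lt_floor l).le
  have hβL2 : L/2 - 2 ≤ (β:ℝ) := by linarith
  have hβ4 : (4:ℝ) ≤ β := by linarith
  have hβ0 : (0:ℝ) < β := by linarith
  have hβhalf : L/2 ≤ 2*(β:ℝ) := by linarith
  -- A bounds
  have hA0 : (0:ℝ) < A := by rw [hA]; positivity
  have hA_ge : L^3/8 ≤ A := by
    rw [hA]
    calc L^3/8 = (L/2)^3 := by ring
      _ ≤ l^3 := pow_le_pow_left₀ (by linarith) hlL2 3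
  have hA_le : A ≤ L^3 := by
    rw [hA]; exact pow_le_pow_left₀ hl0.le hl_le 3
  -- x := β/A
  set x := (β:ℝ)/A with hxdef
  have hx0 : (0:ℝ) ≤ x := by positivity
  have hx_le : x ≤ 8/L^2 := by
    have : x ≤ L/(L^3/8) := div_le_div₀ (by positivity) (hβ_le.trans hl_le) (by positivity) hA_ge
    have e : L/(L^3/8) = 8/L^2 := by field_simp
    linarith [e ▸ this]
  have htx : 2*(t:ℝ)*x ≤ 16/L := by
    have : 2*(t:ℝ)*x ≤ 2*L*(8/L^2) := by
      have := mul_le_mul (mul_le_mul_of_nonneg_left htL (by norm_num : (0:ℝ) ≤ 2)) hx_le hx0 (by positivity)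
      linarith
    have e : 2*L*(8/L^2) = 16/L := by field_simp; ring
    linarith
  have h16L : 16/L ≤ 1/2 := by
    rw [div_le_div_iff₀ hL0 (by norm_num)]; linarith
  have h2tx : 2*(t:ℝ)*x ≤ 1/2 := by linarith
  have hx_half : x ≤ 1/2 := by
    have h8 : 8/L^2 ≤ 1/2 := by
      rw [div_le_div_iff₀ (by positivity) (by norm_num)]
      have hLL : L ≤ L^2 := by linarith [sq_nonneg (L-1)]
      linarith
    linarith
  -- Bernoulli
  have hbern : 1 - 2*(t:ℝ)*x ≤ (1-x)^(2*t) := by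
    have := one_add_mul_le_pow (show (-2:ℝ) ≤ -x by linarith) (2*t)
    have e : ((2*t : ℕ):ℝ) = 2*(t:ℝ) := by push_cast; ring
    calc 1 - 2*(t:ℝ)*x = 1 + ((2*t:ℕ):ℝ) * (-x) := by rw [e]; ring
      _ ≤ (1 + -x)^(2*t) := this
      _ = (1-x)^(2*t) := by ring_nf
  -- term1 bound
  have ha : (1 - 2/(β:ℝ))⁻¹ ≤ 1 + 4/(β:ℝ) := by
    have h0 : (0:ℝ) ≤ 2/(β:ℝ) := by positivity
    have hh : 2/(β:ℝ) ≤ 1/2 := by rw [div_le_div_iff₀ hβ0 (by norm_num)]; linarith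
    have := inv_aux h0 hh
    calc (1 - 2/(β:ℝ))⁻¹ ≤ 1 + 2*(2/(β:ℝ)) := this
      _ = 1 + 4/(β:ℝ) := by ring
  have hb : ((1-x)^(2*t))⁻¹ ≤ 1 + 4*(t:ℝ)*x := by
    have hp : (0:ℝ) < 1 - 2*(t:ℝ)*x := by linarith
    have h1' : ((1-x)^(2*t))⁻¹ ≤ (1 - 2*(t:ℝ)*x)⁻¹ := inv_anti₀ hp hbern
    have h2' := inv_aux (show (0:ℝ) ≤ 2*(t:ℝ)*x by positivity) h2tx
    calc ((1-x)^(2*t))⁻¹ ≤ (1 - 2*(t:ℝ)*x)⁻¹ := h1'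
      _ ≤ 1 + 2*(2*(t:ℝ)*x) := h2'
      _ = 1 + 4*(t:ℝ)*x := by ring
  have hb0 : (0:ℝ) ≤ ((1-x)^(2*t))⁻¹ :=
    inv_nonneg.mpr (pow_nonneg (by linarith) _)
  have hab : (1 - 2/(β:ℝ))⁻¹ * ((1-x)^(2*t))⁻¹ ≤ (1 + 4/(β:ℝ))*(1 + 4*(t:ℝ)*x) :=
    mul_le_mul ha hb hb0 (by positivity)
  have h4β : 4/(β:ℝ) ≤ 1 := by rw [div_le_one hβ0]; linarith
  have hterm1 : (1 - 2/(β:ℝ))⁻¹ * ((1-x)^(2*t))⁻¹ - 1 ≤ 4/(β:ℝ) + 8*(t:ℝ)*x := by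
    have htx0 : (0:ℝ) ≤ 4*(t:ℝ)*x := by positivity
    have hmul : (4/(β:ℝ)) * (4*(t:ℝ)*x) ≤ 4*(t:ℝ)*x := mul_le_of_le_one_left htx0 h4β
    have hexp2 : (1 + 4/(β:ℝ))*(1 + 4*(t:ℝ)*x) - 1 - 4/(β:ℝ) - 8*(t:ℝ)*x
        = (4/(β:ℝ)) * (4*(t:ℝ)*x) - 4*(t:ℝ)*x := by ring
    linarith
  -- rpow identities
  have e1 : L ^ (-δ) = L ^ (1-δ) / L := by
    rw [show -δ = (1-δ) - 1 by ring, Real.rpow_sub hL0, Real.rpow_one]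
  have e2 : (L^(1-δ))^2 / L^2 = L ^ (-(2*δ)) := by
    rw [← Real.rpow_natCast (L^(1-δ)) 2, ← Real.rpow_natCast L 2,
      ← Real.rpow_mul hL0.le, ← Real.rpow_sub hL0]
    congr 1; push_cast; ring
  -- term1 * t bound
  have hT1 : ((1 - 2/(β:ℝ))⁻¹ * ((1-x)^(2*t))⁻¹ - 1) * (t:ℝ)
      ≤ 8 * L ^ (-δ) + 64 * L ^ (-(2*δ)) := by
    have step : ((1 - 2/(β:ℝ))⁻¹ * ((1-x)^(2*t))⁻¹ - 1) * (t:ℝ)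
        ≤ (4/(β:ℝ) + 8*(t:ℝ)*x) * (t:ℝ) := mul_le_mul_of_nonneg_right hterm1 ht0.le
    have b1 : 4*(t:ℝ)/(β:ℝ) ≤ 8 * L ^ (-δ) := by
      have : 4*(t:ℝ)/(β:ℝ) ≤ 4*(L^(1-δ))/(L/2) :=
        div_le_div₀ (by positivity) (by linarith) (by linarith) (by linarith)
      have e : 4*(L^(1-δ))/(L/2) = 8 * (L^(1-δ)/L) := by field_simp; ring
      rw [e1]; linarith [e ▸ this]
    have b2 : 8*(t:ℝ)^2*x ≤ 64 * L ^ (-(2*δ)) := by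
      have ht2 : (t:ℝ)^2 ≤ (L^(1-δ))^2 := pow_le_pow_left₀ ht0.le htre 2
      have hmm := mul_le_mul ht2 hx_le hx0 (by positivity)
      have : 8*(t:ℝ)^2*x ≤ 8*(L^(1-δ))^2*(8/L^2) := by linarith
      have e : 8*(L^(1-δ))^2*(8/L^2) = 64 * ((L^(1-δ))^2/L^2) := by ring
      rw [← e2]; linarith [e ▸ this]
    have expand : (4/(β:ℝ) + 8*(t:ℝ)*x) * (t:ℝ) = 4*(t:ℝ)/(β:ℝ) + 8*(t:ℝ)^2*x := by ring
    linarith [expand ▸ step]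
  -- term2
  have hc1 : (n:ℝ)/((n:ℝ)-1) ≤ 2 := by
    rw [div_le_iff₀ (by linarith)]; linarith
  have hc1' : (0:ℝ) ≤ (n:ℝ)/((n:ℝ)-1) := div_nonneg (by linarith) (by linarith)
  have hc2 : 2*A^2/(n:ℝ)^2 ≤ 8*L^6/(n':ℝ)^2 := by
    have hA2 : A^2 ≤ L^6 := by
      have := pow_le_pow_left₀ hA0.le hA_le 2
      calc A^2 ≤ (L^3)^2 := this
        _ = L^6 := by ring
    have hn2 : (n':ℝ)^2/4 ≤ (n:ℝ)^2 := by
      have := pow_le_pow_left₀ (by positivity : (0:ℝ) ≤ (n':ℝ)/2) hn_half 2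
      calc (n':ℝ)^2/4 = ((n':ℝ)/2)^2 := by ring
        _ ≤ (n:ℝ)^2 := this
    have : 2*A^2/(n:ℝ)^2 ≤ 2*L^6/((n':ℝ)^2/4) :=
      div_le_div₀ (by positivity) (by linarith) (by positivity) hn2
    have e : 2*L^6/((n':ℝ)^2/4) = 8*L^6/(n':ℝ)^2 := by field_simp; ring
    linarith [e ▸ this]
  have hc2' : (0:ℝ) ≤ 2*A^2/(n:ℝ)^2 := by positivity
  -- (2t)^{2t} ≤ exp (L/2)
  have h2t0 : (0:ℝ) < 2*(t:ℝ) := by linarith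
  have hc3 : (2*(t:ℝ))^(2*t) ≤ Real.exp (L/2) := by
    have key : 2*(t:ℝ) * Real.log (2*(t:ℝ)) ≤ L/2 := by
      have ht1' : (1:ℝ) ≤ (t:ℝ) := by exact_mod_cast ht1
      have hlog2t_nn : 0 ≤ Real.log (2*(t:ℝ)) := Real.log_nonneg (by linarith)
      have hlogL1 : (1:ℝ) ≤ Real.log L := by
        rw [Real.le_log_iff_exp_le hL0]
        have := Real.exp_one_lt_d9; linarith
      have hlog2t : Real.log (2*(t:ℝ)) ≤ 2 * Real.log L := by
        have s1 : Real.log (2*(t:ℝ)) ≤ Real.log (2*L) := Real.log_le_log h2t0 (by linarith)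
        have s2 : Real.log (2*L) = Real.log 2 + Real.log L := Real.log_mul (by norm_num) hL0.ne'
        have : Real.log 2 ≤ 1 := by have := Real.log_two_lt_d9; linarith
        linarith
      have hlogL : Real.log L ≤ (2/δ) * L^(δ/2) := by
        have s1 : Real.log (L^(δ/2)) = (δ/2) * Real.log L := Real.log_rpow hL0 _
        have s2 : Real.log (L^(δ/2)) ≤ L^(δ/2) := by
          have := Real.log_le_sub_one_of_pos (show (0:ℝ) < L^(δ/2) by positivity)
          linarith
        have h3' : (δ/2) * Real.log L ≤ L^(δ/2) := by linarith [s1 ▸ s2]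
        have h4' := mul_le_mul_of_nonneg_left h3' (by positivity : (0:ℝ) ≤ 2/δ)
        calc Real.log L = (2/δ)*((δ/2)*Real.log L) := by field_simp
          _ ≤ (2/δ)*L^(δ/2) := h4'
      have hlog2t' : Real.log (2*(t:ℝ)) ≤ (4/δ) * L^(δ/2) := by
        calc Real.log (2*(t:ℝ)) ≤ 2 * Real.log L := hlog2t
          _ ≤ 2*((2/δ) * L^(δ/2)) := mul_le_mul_of_nonneg_left hlogL (by norm_num)
          _ = (4/δ) * L^(δ/2) := by ring
      have main : 2*(t:ℝ) * Real.log (2*(t:ℝ)) ≤ 2*(L^(1-δ)) * ((4/δ) * L^(δ/2)) := by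
        have := mul_le_mul (by linarith : 2*(t:ℝ) ≤ 2*(L^(1-δ)))
          hlog2t' hlog2t_nn (by positivity)
        linarith
      have emul : L^(1-δ) * L^(δ/2) = L * (L^(δ/2))⁻¹ := by
        rw [← Real.rpow_add hL0, show (1-δ)+δ/2 = 1 + (-(δ/2)) by ring,
          Real.rpow_add hL0, Real.rpow_one, Real.rpow_neg hL0.le]
      have hinv : (L^(δ/2))⁻¹ ≤ δ/16 := by
        have : (L^(δ/2))⁻¹ ≤ (16/δ)⁻¹ := inv_anti₀ (by positivity) h2
        rw [show (16/δ)⁻¹ = δ/16 by rw [inv_div]] at this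
        exact this
      have final : 2*(L^(1-δ)) * ((4/δ) * L^(δ/2)) ≤ L/2 := by
        have hr : 2*(L^(1-δ)) * ((4/δ) * L^(δ/2)) = (8/δ) * (L * (L^(δ/2))⁻¹) := by
          rw [← emul]; ring
        rw [hr]
        have : L * (L^(δ/2))⁻¹ ≤ L * (δ/16) := by
          exact mul_le_mul_of_nonneg_left hinv hL0.le
        calc (8/δ) * (L * (L^(δ/2))⁻¹) ≤ (8/δ) * (L * (δ/16)) := by
              exact mul_le_mul_of_nonneg_left this (by positivity)
          _ = L/2 := by field_simp; ring
      linarith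
    calc (2*(t:ℝ))^(2*t) = Real.exp (Real.log (2*(t:ℝ))) ^ (2*t) := by rw [Real.exp_log h2t0]
      _ = Real.exp (((2*t:ℕ):ℝ) * Real.log (2*(t:ℝ))) := (Real.exp_nat_mul _ _).symm
      _ ≤ Real.exp (L/2) := by
          apply Real.exp_le_exp.mpr
          push_cast
          linarith [key]
  have hc3' : (0:ℝ) ≤ (2*(t:ℝ))^(2*t) := by positivity
  -- L^7 ≤ exp(L/2)
  have hL7 : L^7 ≤ Real.exp (L/2) := by
    have e : Real.exp (L/2) = Real.exp (L/16) ^ 8 := by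
      rw [← Real.exp_nat_mul]; congr 1; push_cast; ring
    have h16 : L/16 + 1 ≤ Real.exp (L/16) := Real.add_one_le_exp _
    have hp : (L/16)^8 ≤ Real.exp (L/16)^8 :=
      pow_le_pow_left₀ (by positivity) (by linarith) 8
    have e2 : (L/16)^8 = L^7 * (L/4294967296) := by ring
    have : L^7 ≤ L^7 * (L/4294967296) :=
      le_mul_of_one_le_right (by positivity) (by linarith)
    rw [e]; linarith [e2 ▸ this]
  -- term2 * t bound
  set E := Real.exp (L/2) with hE
  have hE0 : (0:ℝ) < E := Real.exp_pos _
  have hEE : E * E = (n':ℝ) := by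
    rw [hE, ← Real.exp_add, show L/2 + L/2 = L by ring, hLdef, Real.exp_log hn'0]
  have hT2 : ((n:ℝ)/((n:ℝ)-1)) * (2*A^2/(n:ℝ)^2) * (2*(t:ℝ))^(2*t) * (t:ℝ) ≤ 16 * ((n':ℝ))⁻¹ := by
    have hub2 : (0:ℝ) ≤ 8*L^6/(n':ℝ)^2 := by positivity
    have m12 : ((n:ℝ)/((n:ℝ)-1)) * (2*A^2/(n:ℝ)^2) ≤ 2 * (8*L^6/(n':ℝ)^2) :=
      mul_le_mul hc1 hc2 hc2' (by norm_num)
    have m123 : ((n:ℝ)/((n:ℝ)-1)) * (2*A^2/(n:ℝ)^2) * (2*(t:ℝ))^(2*t)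
        ≤ 2 * (8*L^6/(n':ℝ)^2) * E :=
      mul_le_mul m12 hc3 hc3' (by positivity)
    have m : ((n:ℝ)/((n:ℝ)-1)) * (2*A^2/(n:ℝ)^2) * (2*(t:ℝ))^(2*t) * (t:ℝ)
        ≤ 2 * (8*L^6/(n':ℝ)^2) * E * L :=
      mul_le_mul m123 htL ht0.le (by positivity)
    have efin : 2 * (8*L^6/(n':ℝ)^2) * E * L = 16 * (L^7 * E) / (n':ℝ)^2 := by
      field_simp; ring
    have hnum : 16 * (L^7 * E) ≤ 16 * (n':ℝ) := by
      have h5' := mul_le_mul_of_nonneg_right hL7 hE0.le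
      linarith [h5', hEE]
    have efin2 : 16 * (n':ℝ) / (n':ℝ)^2 = 16 * ((n':ℝ))⁻¹ := by
      field_simp
    have hdiv : 16 * (L^7 * E) / (n':ℝ)^2 ≤ 16 * (n':ℝ) / (n':ℝ)^2 := by gcongr
    calc ((n:ℝ)/((n:ℝ)-1)) * (2*A^2/(n:ℝ)^2) * (2*(t:ℝ))^(2*t) * (t:ℝ)
        ≤ 2 * (8*L^6/(n':ℝ)^2) * E * L := m
      _ = 16 * (L^7 * E) / (n':ℝ)^2 := efin
      _ ≤ 16 * (n':ℝ) / (n':ℝ)^2 := hdiv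
      _ = 16 * ((n':ℝ))⁻¹ := efin2
  -- assemble
  have hrp1 : (0:ℝ) ≤ 8 * L ^ (-δ) := by positivity
  have hrp2 : (0:ℝ) ≤ 64 * L ^ (-(2*δ)) := by positivity
  have hrp3 : (0:ℝ) ≤ 16 * ((n':ℝ))⁻¹ := by positivity
  constructor
  · apply mul_nonneg _ ht0.le
    refine le_trans ?_ (le_max_right _ _)
    exact mul_nonneg (mul_nonneg hc1' hc2') hc3'
  · rcases max_cases ((1 - 2 / (β : ℝ))⁻¹ * ((1 - (β : ℝ) / A) ^ (2 * t))⁻¹ - 1)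
      (((n : ℝ) / ((n : ℝ) - 1)) * (2 * A ^ 2 / (n : ℝ) ^ 2) * (2 * (t : ℝ)) ^ (2 * t)) with
      ⟨hmx, _⟩ | ⟨hmx, _⟩ <;> rw [hmx]
    · linarith [hT1]
    · linarith [hT2]

/-- the parameter `ε` of the Min-Knapsack SoS solution satisfies
`ε · t → 0` as `n' → ∞`, i.e. `ε = o(t⁻¹)`. -/
theorem stmt6 (δ : ℝ) (hδ0 : 0 < δ) (hδ1 : δ < 1) :
    Filter.Tendsto (fun n' : ℕ =>
      let t : ℕ := ⌊(Real.log n') ^ (1 - δ)⌋₊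
      let n : ℕ := (n' / t) * t
      let β : ℕ := ⌊Real.log n⌋₊
      let A : ℝ := (Real.log n) ^ 3
      let ε : ℝ := max ((1 - 2 / (β : ℝ))⁻¹ * ((1 - (β : ℝ) / A) ^ (2 * t))⁻¹ - 1)
          (((n : ℝ) / ((n : ℝ) - 1)) * (2 * A ^ 2 / (n : ℝ) ^ 2) * (2 * (t : ℝ)) ^ (2 * t))
      ε * (t : ℝ)) Filter.atTop (nhds 0) := by
  have hcast : Tendsto (fun n' : ℕ => (n' : ℝ)) atTop atTop := tendsto_natCast_atTop_atTop
  have hL : Tendsto (fun n' : ℕ => Real.log n') atTop atTop := Real.tendsto_log_atTop.comp hcast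
  have hg0 : Tendsto (fun n' : ℕ => 8 * Real.log n' ^ (-δ) + 64 * Real.log n' ^ (-(2*δ)) + 16 * ((n':ℝ))⁻¹) atTop (nhds 0) := by
    have h1 := (tendsto_rpow_neg_atTop hδ0).comp hL
    have h2 := (tendsto_rpow_neg_atTop (by linarith : 0 < 2*δ)).comp hL
    have h3 := tendsto_inv_atTop_zero.comp hcast
    have := ((h1.const_mul (8:ℝ)).add (h2.const_mul (64:ℝ))).add (h3.const_mul (16:ℝ))
    simpa using this
  have hev1 : ∀ᶠ n' : ℕ in atTop, (10^10 : ℝ) ≤ Real.log n' := hL.eventually_ge_atTop _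
  have hev2 : ∀ᶠ n' : ℕ in atTop, (16/δ : ℝ) ≤ Real.log n' ^ (δ/2) :=
    ((tendsto_rpow_atTop (by positivity)).comp hL).eventually_ge_atTop _
  have hev3 : ∀ᶠ n' : ℕ in atTop, (16:ℝ) ≤ n' := hcast.eventually_ge_atTop 16
  refine squeeze_zero' ?_ ?_ hg0
  · filter_upwards [hev1, hev2, hev3] with n' h1 h2 h3
    exact (key δ hδ0 hδ1 n' _ _ _ _ rfl rfl rfl rfl h1 h2 h3).1
  · filter_upwards [hev1, hev2, hev3] with n' h1 h2 h3
    exact (key δ hδ0 hδ1 n' _ _ _ _ rfl rfl rfl rfl h1 h2 h3).2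
end

section
/- Let n ≥ 2 and t ≥ 1 be integers and let y : 2^N → ℝ satisfy: y_I ≥ 0 for every I ⊆ N, y_I = 0 whenever |I| = 1, y_∅ ≤ 1, and the matrix inequality Σ_{∅≠I⊆N} y_I · (|I| − 2) · Z_I Z_I^⊤ ⪰ (n/(n−1)) · Z_∅ Z_∅^⊤ holds for matrices indexed by P_t(N). Then: (a) the matrix Σ_{I⊆N} (|I| − n/(n−1)) · y_I · Z_I Z_I^⊤ indexed by P_t(N) is positive semidefinite; and (b) for every i ∈ N, the matrix Σ_{I⊆N} (|I∖{i}| − 1) · y_I · Z_I Z_I^⊤ indexed by P_t(N) is positive semidefinite. -/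
open Matrix

abbrev Pidx (n t : ℕ) := {S : Finset (Fin n) // S.card ≤ t}

noncomputable def zeta (n t : ℕ) (I : Finset (Fin n)) : Pidx n t → ℝ :=
  fun J => if J.1 ⊆ I then 1 else 0

/-- The matrix `Σ_I v_I Z_I Z_I^⊤` indexed by subsets of cardinality at most `q`. -/
noncomputable def momentOf (n q : ℕ) (v : Finset (Fin n) → ℝ) :
    Matrix (Pidx n q) (Pidx n q) ℝ :=
  ∑ I : Finset (Fin n), v I • Matrix.vecMulVec (zeta n q I) (zeta n q I)

lemma quad_one {ι : Type*} [Fintype ι] (c : ℝ) (z x : ι → ℝ) :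
    x ⬝ᵥ (c • Matrix.vecMulVec z z) *ᵥ x = c * (z ⬝ᵥ x) ^ 2 := by
  have h : Matrix.vecMulVec z z *ᵥ x = (z ⬝ᵥ x) • z := by
    funext i
    simp [mulVec, dotProduct, Matrix.vecMulVec_apply, Finset.mul_sum, Finset.sum_mul, mul_comm,
      mul_left_comm]
  rw [Matrix.smul_mulVec, h, dotProduct_smul, dotProduct_smul, dotProduct_comm]
  simp [sq]

lemma quad_sum {ι : Type*} [Fintype ι] {α : Type*} (s : Finset α) (c : α → ℝ)
    (z : α → ι → ℝ) (x : ι → ℝ) :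
    x ⬝ᵥ (∑ a ∈ s, c a • Matrix.vecMulVec (z a) (z a)) *ᵥ x
      = ∑ a ∈ s, c a * (z a ⬝ᵥ x) ^ 2 := by
  classical
  induction s using Finset.induction with
  | empty => simp
  | insert _ _ h ih =>
    rw [Finset.sum_insert h, Finset.sum_insert h, Matrix.add_mulVec, dotProduct_add,
      quad_one, ih]

lemma momentOf_herm (n q : ℕ) (v : Finset (Fin n) → ℝ) : (momentOf n q v).IsHermitian := by
  show _ᴴ = _
  ext J K
  simp [momentOf, Matrix.conjTranspose_apply, Matrix.sum_apply, Matrix.vecMulVec_apply,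
    mul_comm]

/-- the single matrix inequality
`Σ_{∅≠I} y_I (|I|-2) Z_I Z_I^⊤ ⪰ (n/(n-1)) Z_∅ Z_∅^⊤` implies the PSD conditions for
the knapsack constraint and for all the cover constraints. -/
theorem stmt7 (n t : ℕ) (hn : 2 ≤ n) (ht : 1 ≤ t) (y : Finset (Fin n) → ℝ)
    (hpos : ∀ I : Finset (Fin n), 0 ≤ y I)
    (hone : ∀ I : Finset (Fin n), I.card = 1 → y I = 0)
    (hempty : y ∅ ≤ 1)
    (hineq : ((∑ I ∈ Finset.univ.filter (fun I : Finset (Fin n) => I ≠ ∅),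
        (y I * ((I.card : ℝ) - 2)) • Matrix.vecMulVec (zeta n t I) (zeta n t I)) -
        ((n : ℝ) / ((n : ℝ) - 1)) •
          Matrix.vecMulVec (zeta n t ∅) (zeta n t ∅)).PosSemidef) :
    (momentOf n t (fun I => ((I.card : ℝ) - (n : ℝ) / ((n : ℝ) - 1)) * y I)).PosSemidef ∧
    (∀ i : Fin n, (momentOf n t
      (fun I => (((I.erase i).card : ℝ) - 1) * y I)).PosSemidef) := by
  classical
  set c : ℝ := (n : ℝ) / ((n : ℝ) - 1) with hc
  have hn2 : (2 : ℝ) ≤ (n : ℝ) := by exact_mod_cast hn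
  have hd : (0 : ℝ) < (n : ℝ) - 1 := by linarith
  have hc1 : 1 ≤ c := by rw [hc, le_div_iff₀ hd]; linarith
  have hc2 : c ≤ 2 := by rw [hc, div_le_iff₀ hd]; linarith
  -- the scalar form of the hypothesis
  have hG : ∀ x : Pidx n t → ℝ,
      0 ≤ (∑ I ∈ Finset.univ.filter (fun I : Finset (Fin n) => I ≠ ∅),
            (y I * ((I.card : ℝ) - 2)) * (zeta n t I ⬝ᵥ x) ^ 2)
          - c * (zeta n t ∅ ⬝ᵥ x) ^ 2 := by
    intro x
    have := hineq.dotProduct_mulVec_nonneg x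
    rwa [star_trivial, Matrix.sub_mulVec, dotProduct_sub, quad_sum, quad_one] at this
  have hfil : Finset.univ.filter (fun I : Finset (Fin n) => I ≠ ∅)
      = (Finset.univ : Finset (Finset (Fin n))).erase ∅ := by
    ext I; simp [Finset.mem_erase, and_comm]
  have hsq : ∀ (x : Pidx n t → ℝ) (I : Finset (Fin n)), 0 ≤ (zeta n t I ⬝ᵥ x) ^ 2 :=
    fun x I => sq_nonneg _
  constructor
  · refine Matrix.PosSemidef.of_dotProduct_mulVec_nonneg (momentOf_herm n t _) fun x => ?_
    rw [star_trivial]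
    rw [momentOf, quad_sum]
    have hstep : ∑ I ∈ (Finset.univ : Finset (Finset (Fin n))).erase ∅,
        (y I * ((I.card : ℝ) - 2)) * (zeta n t I ⬝ᵥ x) ^ 2
        ≤ ∑ I ∈ (Finset.univ : Finset (Finset (Fin n))).erase ∅,
        (((I.card : ℝ) - c) * y I) * (zeta n t I ⬝ᵥ x) ^ 2 := by
      refine Finset.sum_le_sum fun I _ => ?_
      have key : 0 ≤ ((2 - c) * y I) * (zeta n t I ⬝ᵥ x) ^ 2 :=
        mul_nonneg (mul_nonneg (by linarith) (hpos I)) (hsq x I)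
      have e : ((I.card : ℝ) - c) * y I * (zeta n t I ⬝ᵥ x) ^ 2
          = y I * ((I.card : ℝ) - 2) * (zeta n t I ⬝ᵥ x) ^ 2
            + ((2 - c) * y I) * (zeta n t I ⬝ᵥ x) ^ 2 := by ring
      linarith
    have hG' := hG x
    rw [hfil] at hG'
    rw [← Finset.add_sum_erase _ _ (Finset.mem_univ (∅ : Finset (Fin n)))]
    simp only [Finset.card_empty, Nat.cast_zero, zero_sub]
    have h0 : 0 ≤ (zeta n t ∅ ⬝ᵥ x) ^ 2 := hsq x ∅
    have key : 0 ≤ (c * (1 - y ∅)) * (zeta n t ∅ ⬝ᵥ x) ^ 2 :=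
      mul_nonneg (mul_nonneg (by linarith) (by linarith)) h0
    have e : (c * (1 - y ∅)) * (zeta n t ∅ ⬝ᵥ x) ^ 2
        = c * (zeta n t ∅ ⬝ᵥ x) ^ 2 - (0 - c) * y ∅ * (zeta n t ∅ ⬝ᵥ x) ^ 2
          - c * (zeta n t ∅ ⬝ᵥ x) ^ 2 * y ∅ + (0 - c) * y ∅ * (zeta n t ∅ ⬝ᵥ x) ^ 2 := by
      ring
    linarith
  · intro i
    refine Matrix.PosSemidef.of_dotProduct_mulVec_nonneg (momentOf_herm n t _) fun x => ?_
    rw [star_trivial]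
    rw [momentOf, quad_sum]
    have hstep : ∑ I ∈ (Finset.univ : Finset (Finset (Fin n))).erase ∅,
        (y I * ((I.card : ℝ) - 2)) * (zeta n t I ⬝ᵥ x) ^ 2
        ≤ ∑ I ∈ (Finset.univ : Finset (Finset (Fin n))).erase ∅,
        ((((I.erase i).card : ℝ) - 1) * y I) * (zeta n t I ⬝ᵥ x) ^ 2 := by
      refine Finset.sum_le_sum fun I _ => ?_
      have h1 : I.card ≤ (I.erase i).card + 1 := by
        have := Finset.pred_card_le_card_erase (s := I) (a := i)
        omega
      have h1' : (I.card : ℝ) ≤ ((I.erase i).card : ℝ) + 1 := by exact_mod_cast h1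
      have key : 0 ≤ ((((I.erase i).card : ℝ) + 1 - I.card) * y I) * (zeta n t I ⬝ᵥ x) ^ 2 :=
        mul_nonneg (mul_nonneg (by linarith) (hpos I)) (hsq x I)
      have e : (((I.erase i).card : ℝ) - 1) * y I * (zeta n t I ⬝ᵥ x) ^ 2
          = y I * ((I.card : ℝ) - 2) * (zeta n t I ⬝ᵥ x) ^ 2
            + ((((I.erase i).card : ℝ) + 1 - I.card) * y I) * (zeta n t I ⬝ᵥ x) ^ 2 := by ring
      linarith
    have hG' := hG x
    rw [hfil] at hG'
    rw [← Finset.add_sum_erase _ _ (Finset.mem_univ (∅ : Finset (Fin n)))]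
    simp only [Finset.erase_empty, Finset.card_empty, Nat.cast_zero, zero_sub]
    have h0 : 0 ≤ (zeta n t ∅ ⬝ᵥ x) ^ 2 := hsq x ∅
    have key : 0 ≤ (c - y ∅) * (zeta n t ∅ ⬝ᵥ x) ^ 2 :=
      mul_nonneg (by linarith) h0
    have e : (c - y ∅) * (zeta n t ∅ ⬝ᵥ x) ^ 2
        = c * (zeta n t ∅ ⬝ᵥ x) ^ 2 - (0 - 1) * y ∅ * (zeta n t ∅ ⬝ᵥ x) ^ 2
          - (zeta n t ∅ ⬝ᵥ x) ^ 2 * y ∅ + (0 - 1) * y ∅ * (zeta n t ∅ ⬝ᵥ x) ^ 2 := by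
      ring
    linarith
end

section
/- Let n ≥ 2 and t ≥ 1 be integers and let y_1, ..., y_n be real numbers with y_k · (k − 2) ≥ 0 for every k ∈ {1, ..., n}. Suppose that for all real numbers r_1, ..., r_t ∈ [1, n]: Σ_{k=1}^{n} y_k · (k − 2) · C(n,k) · Π_{i=1}^{t} (r_i − k)² ≥ (n/(n−1)) · Π_{i=1}^{t} r_i². Then for every real polynomial P of degree at most t: Σ_{k=1}^{n} y_k · (k − 2) · C(n,k) · P(k)² ≥ (n/(n−1)) · P(0)². -/
lemma real_move (N : ℝ) (hN : 2 ≤ N) (ρ : ℝ) :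
    ∃ s l : ℝ, 1 ≤ s ∧ s ≤ N ∧ 0 ≤ l ∧
      (∀ x : ℝ, 1 ≤ x → x ≤ N → l * |x - s| ≤ |x - ρ|) ∧ |ρ| ≤ l * s := by
  rcases lt_or_ge ρ 0 with h0 | h0
  · refine ⟨N, (1 - ρ)/(N - 1), by linarith, le_refl _, by apply div_nonneg <;> linarith, ?_, ?_⟩
    · intro x hx1 hxN
      rw [abs_of_nonpos (by linarith), abs_of_nonneg (by linarith)]
      rw [div_mul_eq_mul_div, div_le_iff₀ (by linarith)]
      nlinarith
    · rw [abs_of_nonpos (by linarith), div_mul_eq_mul_div, le_div_iff₀ (by linarith)]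
      nlinarith
  · rcases lt_or_ge ρ 1 with h1 | h1
    · refine ⟨1, (N - ρ)/(N - 1), le_refl _, by linarith, by apply div_nonneg <;> linarith, ?_, ?_⟩
      · intro x hx1 hxN
        rw [abs_of_nonneg (by linarith), abs_of_nonneg (by linarith)]
        rw [div_mul_eq_mul_div, div_le_iff₀ (by linarith)]
        nlinarith
      · rw [abs_of_nonneg h0, mul_one, le_div_iff₀ (by linarith)]
        nlinarith
    · rcases le_or_gt ρ N with h2 | h2
      · exact ⟨ρ, 1, h1, h2, zero_le_one, fun x _ _ => by rw [one_mul], by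
          rw [abs_of_nonneg (by linarith), one_mul]⟩
      · refine ⟨N, ρ/N, by linarith, le_refl _, by positivity, ?_, ?_⟩
        · intro x hx1 hxN
          rw [abs_of_nonpos (by linarith), abs_of_nonpos (by linarith)]
          rw [div_mul_eq_mul_div, div_le_iff₀ (by linarith)]
          nlinarith
        · rw [abs_of_nonneg (by linarith), div_mul_cancel₀]
          linarith



lemma complex_move (N : ℝ) (hN : 2 ≤ N) (z : ℂ) :
    ∃ s l : ℝ, 1 ≤ s ∧ s ≤ N ∧ 0 ≤ l ∧
      (∀ x : ℝ, 1 ≤ x → x ≤ N → l * |x - s| ≤ ‖↑x - z‖) ∧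
      ‖z‖ ≤ l * s := by
  by_cases ha : z.re = 0
  · refine ⟨N, ‖z‖ / (N - 1), by linarith, le_refl _,
      by apply div_nonneg (norm_nonneg z); linarith, ?_, ?_⟩
    · intro x hx1 hxN
      have h1 : ‖z‖ / (N - 1) * |x - N| ≤ ‖z‖ := by
        rw [abs_of_nonpos (by linarith)]
        rw [div_mul_eq_mul_div, div_le_iff₀ (by linarith)]
        have := norm_nonneg z
        nlinarith
      refine h1.trans ?_
      -- |z| ≤ |x - z| since re z = 0
      have h2 : Complex.normSq z ≤ Complex.normSq (↑x - z) := by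
        simp [Complex.normSq_apply, Complex.sub_re, Complex.sub_im, ha]
        nlinarith
      have := Real.sqrt_le_sqrt h2
      simpa [Complex.norm_def] using this
    · rw [div_mul_eq_mul_div, le_div_iff₀ (by linarith)]
      have := norm_nonneg z
      nlinarith
  · -- z.re ≠ 0
    set a := z.re with haa
    set b := z.im with hbb
    have hz : ‖z‖ ≠ 0 := by
      simp only [ne_eq, norm_eq_zero]
      intro h; exact ha (by simp [haa, h])
    have hzpos : 0 < ‖z‖ := lt_of_le_of_ne (norm_nonneg z) (Ne.symm hz)
    set s₀ : ℝ := Complex.normSq z / a with hs₀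
    set l₀ : ℝ := |a| / ‖z‖ with hl₀
    have hl₀pos : 0 < l₀ := by
      apply div_pos _ hzpos
      exact abs_pos.mpr ha
    have hkey : ∀ x : ℝ, l₀ * |x - s₀| ≤ ‖↑x - z‖ := by
      intro x
      have h2 : (l₀ * |x - s₀|) ^ 2 ≤ (‖↑x - z‖) ^ 2 := by
        rw [Complex.sq_norm]
        have hns : Complex.normSq z = a ^ 2 + b ^ 2 := by
          rw [Complex.normSq_apply]; ring
        have habs2 : (‖z‖) ^ 2 = a ^ 2 + b ^ 2 := by
          rw [Complex.sq_norm, hns]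
        have hx : Complex.normSq (↑x - z) = (x - a) ^ 2 + b ^ 2 := by
          simp [Complex.normSq_apply, Complex.sub_re, Complex.sub_im]; ring
        rw [hx]
        have e1 : (l₀ * |x - s₀|) ^ 2 = (a ^ 2 / (a ^ 2 + b ^ 2)) * (x - s₀) ^ 2 := by
          rw [mul_pow, sq_abs, hl₀]
          rw [div_pow, sq_abs, habs2]
        rw [e1]
        have hab : (0:ℝ) < a ^ 2 + b ^ 2 := by
          have h4 : a ^ 2 > 0 := pow_pos (abs_pos.mpr ha) 2 |>.trans_le (by rw [sq_abs])
          nlinarith [sq_nonneg b]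
        rw [div_mul_eq_mul_div, div_le_iff₀ hab]
        have e2 : a * (x - s₀) = a * x - (a ^ 2 + b ^ 2) := by
          rw [hs₀, hns]
          field_simp
        have e3 : a ^ 2 * (x - s₀) ^ 2 = (a * x - (a ^ 2 + b ^ 2)) ^ 2 := by
          rw [← e2]; ring
        rw [e3]
        nlinarith [sq_nonneg (x * b)]
      exact le_of_pow_le_pow_left₀ two_ne_zero (norm_nonneg _) h2
    have hat : l₀ * |s₀| = ‖z‖ := by
      rw [hl₀, hs₀, abs_div]
      have : |Complex.normSq z| = (‖z‖) ^ 2 := by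
        rw [abs_of_nonneg (Complex.normSq_nonneg z), Complex.sq_norm]
      rw [this]
      field_simp
    obtain ⟨s, l₂, hs1, hsN, hl₂, hmv, hat₂⟩ := real_move N hN s₀
    refine ⟨s, l₀ * l₂, hs1, hsN, by positivity, ?_, ?_⟩
    · intro x hx1 hxN
      calc l₀ * l₂ * |x - s| = l₀ * (l₂ * |x - s|) := by ring
        _ ≤ l₀ * |x - s₀| := by
            apply mul_le_mul_of_nonneg_left (hmv x hx1 hxN) (le_of_lt hl₀pos)
        _ ≤ ‖↑x - z‖ := hkey x
    · calc ‖z‖ = l₀ * |s₀| := hat.symm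
        _ ≤ l₀ * (l₂ * s) := mul_le_mul_of_nonneg_left hat₂ (le_of_lt hl₀pos)
        _ = l₀ * l₂ * s := by ring



lemma multiset_move (N : ℝ) (hN : 2 ≤ N) (m : Multiset ℂ) :
    ∃ (f : ℕ → ℝ) (L : ℝ), 0 ≤ L ∧ (∀ j, 1 ≤ f j ∧ f j ≤ N) ∧
      (∀ x : ℝ, 1 ≤ x → x ≤ N →
        L * ∏ j ∈ Finset.range (Multiset.card m), |x - f j| ≤
          (m.map (fun z => ‖(x : ℂ) - z‖)).prod) ∧
      (m.map (‖·‖)).prod ≤ L * ∏ j ∈ Finset.range (Multiset.card m), f j := by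
  induction m using Multiset.induction_on with
  | empty =>
      exact ⟨fun _ => N, 1, zero_le_one, fun j => ⟨by linarith, le_refl _⟩,
        by simp, by simp⟩
  | cons z m ih =>
      obtain ⟨f, L, hL, hf, hfx, hf0⟩ := ih
      obtain ⟨s, l, hs1, hsN, hl, hlx, hl0⟩ := complex_move N hN z
      refine ⟨fun j => if j = 0 then s else f (j - 1), l * L, mul_nonneg hl hL, ?_, ?_, ?_⟩
      · intro j
        by_cases hj : j = 0 <;> simp [hj, hs1, hsN, hf _]
      · intro x hx1 hxN
        rw [Multiset.card_cons, Finset.prod_range_succ', Multiset.map_cons, Multiset.prod_cons]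
        simp only [Nat.add_sub_cancel, if_neg (Nat.succ_ne_zero _), if_pos rfl]
        have hprodnn : (0:ℝ) ≤ ∏ j ∈ Finset.range (Multiset.card m), |x - f j| :=
          Finset.prod_nonneg fun j _ => abs_nonneg _
        calc l * L * ((∏ j ∈ Finset.range (Multiset.card m), |x - f j|) * |x - s|)
            = (l * |x - s|) * (L * ∏ j ∈ Finset.range (Multiset.card m), |x - f j|) := by
              ring
          _ ≤ ‖↑x - z‖ * (m.map (fun w => ‖↑x - w‖)).prod := by
              apply mul_le_mul (hlx x hx1 hxN) (hfx x hx1 hxN)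
                (mul_nonneg hL hprodnn) (norm_nonneg _)
      · rw [Multiset.card_cons, Finset.prod_range_succ', Multiset.map_cons, Multiset.prod_cons]
        simp only [Nat.add_sub_cancel, if_neg (Nat.succ_ne_zero _), if_pos rfl]
        have hprodnn : (0:ℝ) ≤ (m.map (‖·‖)).prod :=
          Multiset.prod_nonneg (by
            intro q hq
            obtain ⟨w, _, rfl⟩ := Multiset.mem_map.mp hq
            exact norm_nonneg w)
        calc ‖z‖ * (m.map (‖·‖)).prod
            ≤ (l * s) * (L * ∏ j ∈ Finset.range (Multiset.card m), f j) :=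
              mul_le_mul hl0 hf0 hprodnn (mul_nonneg hl (by linarith))
          _ = l * L * ((∏ j ∈ Finset.range (Multiset.card m), f j) * s) := by ring

/-- if the weighted inequality holds for all degree-`t` polynomials with
all roots real and in `[1,n]` (root form), it holds for all real polynomials of degree
at most `t`. -/
theorem stmt8 (n t : ℕ) (hn : 2 ≤ n) (ht : 1 ≤ t) (y : ℕ → ℝ)
    (hpos : ∀ k ∈ Finset.Icc 1 n, 0 ≤ y k * ((k : ℝ) - 2))
    (hroot : ∀ r : Fin t → ℝ, (∀ i : Fin t, 1 ≤ r i ∧ r i ≤ (n : ℝ)) →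
      ((n : ℝ) / ((n : ℝ) - 1)) * ∏ i : Fin t, (r i) ^ 2 ≤
        ∑ k ∈ Finset.Icc 1 n,
          y k * ((k : ℝ) - 2) * (n.choose k : ℝ) * ∏ i : Fin t, (r i - (k : ℝ)) ^ 2) :
    ∀ P : Polynomial ℝ, P.natDegree ≤ t →
      ((n : ℝ) / ((n : ℝ) - 1)) * P.eval 0 ^ 2 ≤
        ∑ k ∈ Finset.Icc 1 n,
          y k * ((k : ℝ) - 2) * (n.choose k : ℝ) * P.eval (k : ℝ) ^ 2 := by
  intro P hP
  have hN : (2:ℝ) ≤ (n:ℝ) := by exact_mod_cast hn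
  set N : ℝ := (n:ℝ) with hNdef
  have hN1 : (1:ℝ) ≤ N - 1 := by linarith
  have hc : 0 ≤ N / (N - 1) := by positivity
  by_cases hP0 : P = 0
  · subst hP0; simp
  -- factor P over ℂ
  set Q := P.map (algebraMap ℝ ℂ) with hQ
  have hsplit : Q.Splits := IsAlgClosed.splits Q
  have hcard : Multiset.card Q.roots = P.natDegree := by
    rw [(Polynomial.splits_iff_card_roots).mp hsplit]
    exact Polynomial.natDegree_map (algebraMap ℝ ℂ)
  have hfact : Q = Polynomial.C Q.leadingCoeff *
      (Q.roots.map fun a => Polynomial.X - Polynomial.C a).prod :=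
    hsplit.eq_prod_roots
  have heval : ∀ x : ℝ, |P.eval x| =
      ‖Q.leadingCoeff‖ * (Q.roots.map fun z => ‖(x:ℂ) - z‖).prod := by
    intro x
    have h1 : Q.eval ↑x = ((P.eval x : ℝ) : ℂ) := by
      rw [hQ, Polynomial.eval_map]
      exact Polynomial.eval₂_at_apply (algebraMap ℝ ℂ) x
    have h2 : Q.eval ↑x = Q.leadingCoeff * (Q.roots.map fun z => ((x:ℂ) - z)).prod := by
      conv_lhs => rw [hfact]
      rw [Polynomial.eval_mul, Polynomial.eval_C, Polynomial.eval_multiset_prod,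
        Multiset.map_map]
      simp
    have h3 := congrArg (‖·‖) h2
    rw [h1, Complex.norm_real, norm_mul, show ∀ s : Multiset ℂ, ‖s.prod‖ = (s.map (‖·‖)).prod from
      fun s => map_multiset_prod (normHom : ℂ →*₀ ℝ) s, Multiset.map_map] at h3
    simpa using h3
  set d := P.natDegree with hd
  obtain ⟨f, L, hL, hf, hfx, hf0⟩ := multiset_move N hN Q.roots
  rw [hcard] at hfx hf0
  set e := t - d with he
  have hte : t = d + e := by omega
  set r' : ℕ → ℝ := fun j => if j < d then f j else N with hr'
  set cA : ℝ := ‖Q.leadingCoeff‖ with hcA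
  have hcA0 : 0 ≤ cA := norm_nonneg _
  set A : ℝ := cA * (L * (1 / (N - 1)) ^ e) with hA
  have hA0 : 0 ≤ A := by positivity
  -- product splitting
  have hsplitprod : ∀ g : ℝ → ℝ, ∏ i : Fin t, g (r' i) =
      (∏ j ∈ Finset.range d, g (f j)) * (g N) ^ e := by
    intro g
    rw [Fin.prod_univ_eq_prod_range (fun j => g (r' j)) t, hte, Finset.prod_range_add]
    congr 1
    · exact Finset.prod_congr rfl fun j hj => by
        rw [hr']; simp [Finset.mem_range.mp hj]
    · rw [show (g N) ^ e = ∏ _j ∈ Finset.range e, g N by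
        rw [Finset.prod_const, Finset.card_range]]
      exact Finset.prod_congr rfl fun j _ => by
        rw [hr']; simp
  -- Claim 1
  have claim1 : ∀ x : ℝ, 1 ≤ x → x ≤ N →
      A * ∏ i : Fin t, |x - r' i| ≤ |P.eval x| := by
    intro x hx1 hxN
    have hps := hsplitprod (fun v => |x - v|)
    rw [hps, heval x]
    have hbase : 0 ≤ (1 / (N - 1)) * |x - N| ∧ (1 / (N - 1)) * |x - N| ≤ 1 := by
      constructor
      · positivity
      · rw [abs_of_nonpos (by linarith), one_div, inv_mul_le_iff₀ (by linarith)]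
        linarith
    have hpow1 : ((1 / (N - 1)) * |x - N|) ^ e ≤ 1 :=
      pow_le_one₀ hbase.1 hbase.2
    have hmain : cA * (L * ∏ j ∈ Finset.range d, |x - f j|) ≤
        cA * (Q.roots.map fun z => ‖(x:ℂ) - z‖).prod :=
      mul_le_mul_of_nonneg_left (hfx x hx1 hxN) hcA0
    have hnn : 0 ≤ cA * (L * ∏ j ∈ Finset.range d, |x - f j|) := by
      have : (0:ℝ) ≤ ∏ j ∈ Finset.range d, |x - f j| :=
        Finset.prod_nonneg fun j _ => abs_nonneg _
      positivity
    calc A * ((∏ j ∈ Finset.range d, |x - f j|) * |x - N| ^ e)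
        = (cA * (L * ∏ j ∈ Finset.range d, |x - f j|)) *
            ((1 / (N - 1)) * |x - N|) ^ e := by rw [mul_pow]; ring
      _ ≤ (cA * (L * ∏ j ∈ Finset.range d, |x - f j|)) * 1 :=
          mul_le_mul_of_nonneg_left hpow1 hnn
      _ = cA * (L * ∏ j ∈ Finset.range d, |x - f j|) := mul_one _
      _ ≤ cA * (Q.roots.map fun z => ‖(x:ℂ) - z‖).prod := hmain
  -- Claim 2
  have claim2 : |P.eval 0| ≤ A * ∏ i : Fin t, r' i := by
    have hps := hsplitprod id
    simp only [id] at hps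
    rw [hps]
    have h0 : |P.eval 0| = cA * (Q.roots.map (‖·‖)).prod := by
      rw [heval 0]
      have hmc : (Q.roots.map fun z => ‖((0:ℝ):ℂ) - z‖) =
          Q.roots.map (‖·‖) :=
        Multiset.map_congr rfl fun z _ => by
          rw [Complex.ofReal_zero, zero_sub, norm_neg]
      rw [hmc]
    have hbase1 : (1:ℝ) ≤ (1 / (N - 1)) * N := by
      rw [one_div, inv_mul_eq_div, le_div_iff₀ (by linarith)]
      linarith
    have hpow1 : (1:ℝ) ≤ ((1 / (N - 1)) * N) ^ e := one_le_pow₀ hbase1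
    have hnn : 0 ≤ cA * (L * ∏ j ∈ Finset.range d, f j) := by
      have h2 : (0:ℝ) ≤ ∏ j ∈ Finset.range d, f j :=
        Finset.prod_nonneg fun j _ => by linarith [(hf j).1]
      positivity
    calc |P.eval 0| = cA * (Q.roots.map (‖·‖)).prod := h0
      _ ≤ cA * (L * ∏ j ∈ Finset.range d, f j) :=
          mul_le_mul_of_nonneg_left hf0 hcA0
      _ = cA * (L * ∏ j ∈ Finset.range d, f j) * 1 := (mul_one _).symm
      _ ≤ cA * (L * ∏ j ∈ Finset.range d, f j) * ((1 / (N - 1)) * N) ^ e :=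
          mul_le_mul_of_nonneg_left hpow1 hnn
      _ = A * ((∏ j ∈ Finset.range d, f j) * N ^ e) := by rw [mul_pow]; ring
  -- apply hroot
  have hr : ∀ i : Fin t, 1 ≤ r' (i : ℕ) ∧ r' (i : ℕ) ≤ N := by
    intro i
    by_cases h : (i : ℕ) < d
    · rw [hr']; simp only [if_pos h]; exact hf i
    · rw [hr']; simp only [if_neg h]; exact ⟨by linarith, le_refl _⟩
  have H := hroot (fun i => r' (i : ℕ)) hr
  have hLHS : N / (N - 1) * P.eval 0 ^ 2 ≤
      A ^ 2 * (N / (N - 1) * ∏ i : Fin t, (r' (i : ℕ)) ^ 2) := by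
    have h1 : P.eval 0 ^ 2 ≤ (A * ∏ i : Fin t, r' (i : ℕ)) ^ 2 := by
      rw [← sq_abs (P.eval 0)]
      exact pow_le_pow_left₀ (abs_nonneg _) claim2 2
    calc N / (N - 1) * P.eval 0 ^ 2
        ≤ N / (N - 1) * (A * ∏ i : Fin t, r' (i : ℕ)) ^ 2 :=
          mul_le_mul_of_nonneg_left h1 hc
      _ = A ^ 2 * (N / (N - 1) * ∏ i : Fin t, (r' (i : ℕ)) ^ 2) := by
          rw [Finset.prod_pow, mul_pow]; ring
  have hRHS : A ^ 2 * (∑ k ∈ Finset.Icc 1 n,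
        y k * ((k : ℝ) - 2) * (n.choose k : ℝ) * ∏ i : Fin t, (r' (i : ℕ) - (k : ℝ)) ^ 2) ≤
      ∑ k ∈ Finset.Icc 1 n, y k * ((k : ℝ) - 2) * (n.choose k : ℝ) * P.eval (k : ℝ) ^ 2 := by
    rw [Finset.mul_sum]
    apply Finset.sum_le_sum
    intro k hk
    obtain ⟨hk1, hkn⟩ := Finset.mem_Icc.mp hk
    have hk1' : (1:ℝ) ≤ (k:ℝ) := by exact_mod_cast hk1
    have hkn' : (k:ℝ) ≤ N := by rw [hNdef]; exact_mod_cast hkn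
    have hw : 0 ≤ y k * ((k : ℝ) - 2) * (n.choose k : ℝ) :=
      mul_nonneg (hpos k hk) (Nat.cast_nonneg _)
    have hsq : ∏ i : Fin t, (r' (i : ℕ) - (k : ℝ)) ^ 2 =
        (∏ i : Fin t, |(k : ℝ) - r' (i : ℕ)|) ^ 2 := by
      rw [← Finset.prod_pow]
      exact Finset.prod_congr rfl fun i _ => by rw [sq_abs]; ring
    have hb : (A * ∏ i : Fin t, |(k : ℝ) - r' (i : ℕ)|) ^ 2 ≤ P.eval (k : ℝ) ^ 2 := by
      rw [← sq_abs (P.eval (k:ℝ))]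
      apply pow_le_pow_left₀ _ (claim1 (k:ℝ) hk1' hkn') 2
      have : (0:ℝ) ≤ ∏ i : Fin t, |(k : ℝ) - r' (i : ℕ)| :=
        Finset.prod_nonneg fun i _ => abs_nonneg _
      positivity
    calc A ^ 2 * (y k * ((k : ℝ) - 2) * (n.choose k : ℝ) *
            ∏ i : Fin t, (r' (i : ℕ) - (k : ℝ)) ^ 2)
        = y k * ((k : ℝ) - 2) * (n.choose k : ℝ) *
            (A * ∏ i : Fin t, |(k : ℝ) - r' (i : ℕ)|) ^ 2 := by
          rw [hsq, mul_pow]; ring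
      _ ≤ y k * ((k : ℝ) - 2) * (n.choose k : ℝ) * P.eval (k : ℝ) ^ 2 :=
          mul_le_mul_of_nonneg_left hb hw
  calc N / (N - 1) * P.eval 0 ^ 2
      ≤ A ^ 2 * (N / (N - 1) * ∏ i : Fin t, (r' (i : ℕ)) ^ 2) := hLHS
    _ ≤ A ^ 2 * (∑ k ∈ Finset.Icc 1 n,
          y k * ((k : ℝ) - 2) * (n.choose k : ℝ) *
            ∏ i : Fin t, (r' (i : ℕ) - (k : ℝ)) ^ 2) := by
        apply mul_le_mul_of_nonneg_left H (by positivity)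
    _ ≤ ∑ k ∈ Finset.Icc 1 n, y k * ((k : ℝ) - 2) * (n.choose k : ℝ) * P.eval (k : ℝ) ^ 2 :=
        hRHS
end

section
/- Let n ≥ 1, t ≥ 0 be integers, let z_0, ..., z_n be real numbers, and let M = Σ_{k=0}^{n} z_k Σ_{I ⊆ N, |I| = k} Z_I Z_I^⊤ be the symmetric moment matrix indexed by P_t(N). Then for every eigenvalue λ of M there exists h ∈ {0, 1, ..., t} and real coefficients α_{i,j} (0 ≤ i ≤ t, 0 ≤ j ≤ min(h,i)) such that the vector u_h = Σ_{i=0}^{t} Σ_{j=0}^{min(h,i)} α_{i,j} · b_{i,j} is nonzero and satisfies M u_h = λ u_h, where H = {1, ..., h} and b_{i,j} ∈ ℝ^{P_t(N)} is the 0/1 vector with [b_{i,j}]_Q = 1 if and only if |Q| = i and |Q ∩ H| = j. -/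
noncomputable def momentM (n t : ℕ) (z : ℕ → ℝ) : Matrix (Pidx n t) (Pidx n t) ℝ :=
  ∑ k ∈ Finset.range (n + 1), z k •
    ∑ I ∈ Finset.univ.filter (fun I : Finset (Fin n) => I.card = k),
      Matrix.vecMulVec (zeta n t I) (zeta n t I)

section Aux

variable {n t : ℕ}

def pperm (π : Equiv.Perm (Fin n)) (Q : Pidx n t) : Pidx n t :=
  ⟨Q.1.image ⇑π, by rw [Finset.card_image_of_injective _ π.injective]; exact Q.2⟩

lemma pperm_symm_pperm (π : Equiv.Perm (Fin n)) (Q : Pidx n t) :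
    pperm π.symm (pperm π Q) = Q :=
  Subtype.ext <| by simp [pperm, Finset.image_image]

lemma pperm_pperm_symm (π : Equiv.Perm (Fin n)) (Q : Pidx n t) :
    pperm π (pperm π.symm Q) = Q :=
  Subtype.ext <| by simp [pperm, Finset.image_image]

def ppermE (π : Equiv.Perm (Fin n)) : Pidx n t ≃ Pidx n t where
  toFun := pperm π
  invFun := pperm π.symm
  left_inv := pperm_symm_pperm π
  right_inv := pperm_pperm_symm π

lemma pperm_mul (σ τ : Equiv.Perm (Fin n)) (Q : Pidx n t) :
    pperm (σ * τ) Q = pperm σ (pperm τ Q) :=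
  Subtype.ext <| by simp [pperm, Finset.image_image, Equiv.Perm.coe_mul, Function.comp]

lemma zeta_pperm (π : Equiv.Perm (Fin n)) (I : Finset (Fin n)) (Q : Pidx n t) :
    zeta n t (I.image ⇑π) (pperm π Q) = zeta n t I Q := by
  unfold zeta pperm
  exact if_congr (Finset.image_subset_image_iff π.injective) rfl rfl

lemma momentM_pperm (z : ℕ → ℝ) (π : Equiv.Perm (Fin n)) (J K : Pidx n t) :
    momentM n t z (pperm π J) (pperm π K) = momentM n t z J K := by
  unfold momentM
  simp only [Matrix.sum_apply, Matrix.smul_apply, Matrix.vecMulVec_apply, smul_eq_mul]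
  refine Finset.sum_congr rfl fun k _ => ?_
  congr 1
  refine Finset.sum_nbij' (i := fun I => Finset.image (⇑π.symm) I)
    (j := fun I => Finset.image (⇑π) I) ?_ ?_ ?_ ?_ ?_
  · intro I hI
    simp only [Finset.mem_filter, Finset.mem_univ, true_and] at hI ⊢
    rw [Finset.card_image_of_injective _ π.symm.injective]; exact hI
  · intro I hI
    simp only [Finset.mem_filter, Finset.mem_univ, true_and] at hI ⊢
    rw [Finset.card_image_of_injective _ π.injective]; exact hI
  · intro I _; simp [Finset.image_image]
  · intro I _; simp [Finset.image_image]
  · intro I _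
    have hI : I = (Finset.image (⇑π.symm) I).image ⇑π := by simp [Finset.image_image]
    conv_lhs => rw [hI]
    rw [zeta_pperm, zeta_pperm]

lemma mulVec_pperm (z : ℕ → ℝ) (π : Equiv.Perm (Fin n)) (w : Pidx n t → ℝ) (J : Pidx n t) :
    (momentM n t z).mulVec (fun Q => w (pperm π Q)) J = (momentM n t z).mulVec w (pperm π J) := by
  simp only [Matrix.mulVec, dotProduct]
  calc ∑ K, momentM n t z J K * w (pperm π K)
      = ∑ K, momentM n t z (pperm π J) (pperm π K) * w (pperm π K) :=
        Finset.sum_congr rfl fun K _ => by rw [momentM_pperm]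
    _ = ∑ K, momentM n t z (pperm π J) K * w K :=
        Fintype.sum_equiv (ppermE π) _ _ (fun K => rfl)

lemma eig_pperm {z : ℕ → ℝ} {lam : ℝ} {w : Pidx n t → ℝ}
    (hw : (momentM n t z).mulVec w = lam • w) (π : Equiv.Perm (Fin n)) :
    (momentM n t z).mulVec (fun Q => w (pperm π Q)) = lam • (fun Q => w (pperm π Q)) := by
  funext J
  rw [mulVec_pperm, hw]
  simp

lemma exists_perm_image_eq {α : Type*} [Fintype α] [DecidableEq α]
    {A B : Finset α} (h : A.card = B.card) :
    ∃ π : Equiv.Perm α, A.image ⇑π = B := by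
  classical
  have hc : (Aᶜ : Finset α).card = (Bᶜ : Finset α).card := by
    rw [Finset.card_compl, Finset.card_compl, h]
  let e : {x // x ∈ A} ≃ {x // x ∈ B} := Finset.equivOfCardEq h
  let ec : {x // ¬ x ∈ A} ≃ {x // ¬ x ∈ B} :=
    ((Equiv.subtypeEquivRight fun x => by simp).trans (Finset.equivOfCardEq hc)).trans
      (Equiv.subtypeEquivRight fun x => by simp)
  refine ⟨Equiv.subtypeCongr e ec, ?_⟩
  have hsub : A.image ⇑(Equiv.subtypeCongr e ec) ⊆ B := by
    intro b hb
    obtain ⟨a, ha, rfl⟩ := Finset.mem_image.mp hb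
    have hx : Equiv.subtypeCongr e ec a = (e ⟨a, ha⟩ : α) := by
      simp [Equiv.subtypeCongr, Equiv.sumCompl_symm_apply_of_pos ha]
    rw [hx]
    exact (e ⟨a, ha⟩).2
  exact Finset.eq_of_subset_of_card_le hsub
    (by rw [Finset.card_image_of_injective _ (Equiv.injective _)]; exact h.ge)

lemma exists_perm_two {α : Type*} [Fintype α] [DecidableEq α]
    {A B H : Finset α} (h1 : A.card = B.card) (h2 : (A ∩ H).card = (B ∩ H).card) :
    ∃ π : Equiv.Perm α, H.image ⇑π = H ∧ A.image ⇑π = B := by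
  classical
  have c1 : (A.subtype (· ∈ H)).card = (B.subtype (· ∈ H)).card := by
    rw [Finset.card_subtype, Finset.card_subtype, Finset.filter_mem_eq_inter,
      Finset.filter_mem_eq_inter, h2]
  have c2 : (A.subtype (fun x => ¬ x ∈ H)).card = (B.subtype (fun x => ¬ x ∈ H)).card := by
    rw [Finset.card_subtype, Finset.card_subtype]
    have hA := Finset.card_filter_add_card_filter_not (s := A) (p := (· ∈ H))
    have hB := Finset.card_filter_add_card_filter_not (s := B) (p := (· ∈ H))
    rw [Finset.filter_mem_eq_inter] at hA hB
    omega
  obtain ⟨π₁, hπ₁⟩ := exists_perm_image_eq c1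
  obtain ⟨π₂, hπ₂⟩ := exists_perm_image_eq c2
  refine ⟨Equiv.Perm.subtypeCongr π₁ π₂, ?_, ?_⟩
  · have hsub : H.image ⇑(Equiv.Perm.subtypeCongr π₁ π₂) ⊆ H := by
      intro b hb
      obtain ⟨a, ha, rfl⟩ := Finset.mem_image.mp hb
      rw [Equiv.Perm.subtypeCongr.left_apply _ _ ha]
      exact (π₁ ⟨a, ha⟩).2
    exact Finset.eq_of_subset_of_card_le hsub
      (by rw [Finset.card_image_of_injective _ (Equiv.injective _)])
  · have hsub : A.image ⇑(Equiv.Perm.subtypeCongr π₁ π₂) ⊆ B := by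
      intro b hb
      obtain ⟨a, ha, rfl⟩ := Finset.mem_image.mp hb
      by_cases hH : a ∈ H
      · rw [Equiv.Perm.subtypeCongr.left_apply _ _ hH]
        have : π₁ ⟨a, hH⟩ ∈ (A.subtype (· ∈ H)).image ⇑π₁ :=
          Finset.mem_image_of_mem _ (Finset.mem_subtype.mpr ha)
        rw [hπ₁] at this
        exact Finset.mem_subtype.mp this
      · rw [Equiv.Perm.subtypeCongr.right_apply _ _ hH]
        have : π₂ ⟨a, hH⟩ ∈ (A.subtype (fun x => ¬ x ∈ H)).image ⇑π₂ :=
          Finset.mem_image_of_mem _ (Finset.mem_subtype.mpr ha)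
        rw [hπ₂] at this
        exact Finset.mem_subtype.mp this
    exact Finset.eq_of_subset_of_card_le hsub
      (by rw [Finset.card_image_of_injective _ (Equiv.injective _)]; exact h1.ge)

lemma card_filter_lt {n h : ℕ} (hh : h ≤ n) :
    (Finset.univ.filter (fun x : Fin n => (x : ℕ) < h)).card = h := by
  have key : (Finset.univ.filter (fun x : Fin n => (x : ℕ) < h)).card
      = (Finset.range h).card := by
    refine Finset.card_nbij (fun x => (x : ℕ)) ?_ ?_ ?_
    · intro a ha
      simp only [Finset.coe_filter, Finset.mem_univ, true_and, Set.mem_setOf_eq] at ha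
      simpa using ha
    · intro a _ b _ hab
      exact Fin.val_injective hab
    · intro b hb
      simp only [Finset.coe_range, Set.mem_Iio] at hb
      exact ⟨⟨b, lt_of_lt_of_le hb hh⟩, by simp [hb], rfl⟩
  simpa using key

lemma image_perm_inv_eq {α : Type*} [DecidableEq α] {H : Finset α} {τ : Equiv.Perm α}
    (hτ : H.image ⇑τ = H) : H.image ⇑τ⁻¹ = H := by
  conv_lhs => rw [← hτ]
  rw [Finset.image_image]
  ext x
  simp

lemma image_perm_mul_eq {α : Type*} [DecidableEq α] {H : Finset α} {σ τ : Equiv.Perm α}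
    (hσ : H.image ⇑σ = H) (hτ : H.image ⇑τ = H) : H.image ⇑(σ * τ) = H := by
  rw [Equiv.Perm.coe_mul, ← Finset.image_image, hτ, hσ]

end Aux

/-- every eigenvalue of the moment matrix has an eigenvector of the
structured form `u_h = Σ_{i,j} α_{i,j} b_{i,j}` with `H = {1,...,h}` for some `h ≤ t`,
where `[b_{i,j}]_Q = 1` iff `|Q| = i` and `|Q ∩ H| = j`. -/
theorem stmt14 (n t : ℕ) (hn : 1 ≤ n) (z : ℕ → ℝ) (lam : ℝ)
    (hlam : ∃ w : Pidx n t → ℝ, w ≠ 0 ∧ (momentM n t z).mulVec w = lam • w) :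
    ∃ h : ℕ, h ≤ t ∧ ∃ α : ℕ → ℕ → ℝ, ∀ u : Pidx n t → ℝ,
      (∀ Q : Pidx n t, u Q =
        ∑ i ∈ Finset.range (t + 1), ∑ j ∈ Finset.range (min h i + 1),
          α i j * (if Q.1.card = i ∧
            (Q.1 ∩ Finset.univ.filter (fun x : Fin n => (x : ℕ) < h)).card = j
            then 1 else 0)) →
      u ≠ 0 ∧ (momentM n t z).mulVec u = lam • u := by

  classical
  obtain ⟨w, hw0, hw⟩ := hlam
  obtain ⟨Q₀, hQ₀⟩ := Function.ne_iff.mp hw0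
  refine ⟨Q₀.1.card, Q₀.2, ?_⟩
  set h := Q₀.1.card with hhdef
  have hhn : h ≤ n := by
    have := Finset.card_le_univ Q₀.1
    simpa using this
  set H : Finset (Fin n) := Finset.univ.filter (fun x : Fin n => (x : ℕ) < h) with hH
  have hHcard : H.card = h := card_filter_lt hhn
  obtain ⟨π, hπ⟩ := exists_perm_image_eq (A := Q₀.1) (B := H) (by rw [hHcard])
  set w' : Pidx n t → ℝ := fun Q => w (pperm π.symm Q) with hw'def
  have hw'eig : (momentM n t z).mulVec w' = lam • w' := eig_pperm hw π.symm
  set Y : Finset (Equiv.Perm (Fin n)) := Finset.univ.filter (fun σ => H.image ⇑σ = H) with hY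
  set v : Pidx n t → ℝ := fun Q => ∑ σ ∈ Y, w' (pperm σ Q) with hv
  have hveig : (momentM n t z).mulVec v = lam • v := by
    funext J
    have lhs : (momentM n t z).mulVec v J
        = ∑ σ ∈ Y, (momentM n t z).mulVec (fun Q => w' (pperm σ Q)) J := by
      simp only [Matrix.mulVec, dotProduct, hv, Finset.mul_sum]
      exact Finset.sum_comm
    rw [lhs]
    have hterm : ∀ σ ∈ Y,
        (momentM n t z).mulVec (fun Q => w' (pperm σ Q)) J = lam * w' (pperm σ J) := by
      intro σ _
      rw [eig_pperm hw'eig σ]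
      simp
    rw [Finset.sum_congr rfl hterm]
    simp [hv, Finset.mul_sum]
  have hHle : H.card ≤ t := hHcard ▸ Q₀.2
  have hwH : w' ⟨H, hHle⟩ = w Q₀ := by
    have hp : pperm π.symm (⟨H, hHle⟩ : Pidx n t) = Q₀ := by
      apply Subtype.ext
      show H.image ⇑π.symm = Q₀.1
      rw [← hπ, Finset.image_image]
      simp [Function.comp]
    show w (pperm π.symm ⟨H, hHle⟩) = w Q₀
    rw [hp]
  have hvH : v ⟨H, hHle⟩ ≠ 0 := by
    have hfix : ∀ σ ∈ Y, pperm σ (⟨H, hHle⟩ : Pidx n t) = ⟨H, hHle⟩ := by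
      intro σ hσ
      apply Subtype.ext
      exact (Finset.mem_filter.mp hσ).2
    have hval : v ⟨H, hHle⟩ = (Y.card : ℝ) * w Q₀ := by
      show (∑ σ ∈ Y, w' (pperm σ ⟨H, hHle⟩)) = _
      rw [Finset.sum_congr rfl fun σ hσ => by rw [hfix σ hσ]]
      rw [Finset.sum_const, nsmul_eq_mul, hwH]
    rw [hval]
    have h1Y : (1 : Equiv.Perm (Fin n)) ∈ Y := by
      simp [hY]
    exact mul_ne_zero (Nat.cast_ne_zero.mpr (Finset.card_ne_zero_of_mem h1Y)) hQ₀
  have hvinv : ∀ Q Q' : Pidx n t, Q.1.card = Q'.1.card →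
      (Q.1 ∩ H).card = (Q'.1 ∩ H).card → v Q = v Q' := by
    intro Q Q' h1 h2
    obtain ⟨τ, hτH, hτQ⟩ := exists_perm_two h1 h2
    have hQ' : pperm τ Q = Q' := Subtype.ext hτQ
    rw [← hQ']
    show (∑ σ ∈ Y, w' (pperm σ Q)) = ∑ σ ∈ Y, w' (pperm σ (pperm τ Q))
    refine Finset.sum_nbij' (i := fun σ => σ * τ⁻¹) (j := fun σ => σ * τ) ?_ ?_ ?_ ?_ ?_
    · intro σ hσ
      simp only [hY, Finset.mem_filter, Finset.mem_univ, true_and] at hσ ⊢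
      exact image_perm_mul_eq hσ (image_perm_inv_eq hτH)
    · intro σ hσ
      simp only [hY, Finset.mem_filter, Finset.mem_univ, true_and] at hσ ⊢
      exact image_perm_mul_eq hσ hτH
    · intro σ _; group
    · intro σ _; group
    · intro σ _
      rw [← pperm_mul]
      have : σ * τ⁻¹ * τ = σ := by group
      rw [this]
  refine ⟨fun i j => if hq : ∃ Q : Pidx n t,
      Q.1.card = i ∧ (Q.1 ∩ H).card = j then v hq.choose else 0, fun u hu => ?_⟩
  have huv : ∀ Q, u Q = v Q := by
    intro Q
    rw [hu Q]
    have hiQ : Q.1.card ∈ Finset.range (t + 1) := Finset.mem_range.mpr (Nat.lt_succ_of_le Q.2)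
    have hjQ : (Q.1 ∩ H).card ∈ Finset.range (min h Q.1.card + 1) := by
      refine Finset.mem_range.mpr (Nat.lt_succ_of_le (le_min ?_ ?_))
      · exact le_trans (Finset.card_le_card Finset.inter_subset_right) hHcard.le
      · exact Finset.card_le_card Finset.inter_subset_left
    rw [Finset.sum_eq_single Q.1.card
      (fun b _ hb => Finset.sum_eq_zero fun j _ => by
        rw [if_neg (fun hc => hb hc.1.symm), mul_zero])
      (fun hc => absurd hiQ hc)]
    rw [Finset.sum_eq_single ((Q.1 ∩ H).card)
      (fun j _ hj => by rw [if_neg (fun hc => hj hc.2.symm), mul_zero])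
      (fun hc => absurd hjQ hc)]
    rw [if_pos ⟨rfl, rfl⟩, mul_one]
    have hex : ∃ Q' : Pidx n t, Q'.1.card = Q.1.card ∧ (Q'.1 ∩ H).card = (Q.1 ∩ H).card :=
      ⟨Q, rfl, rfl⟩
    show (if hq : ∃ Q' : Pidx n t, Q'.1.card = Q.1.card ∧ (Q'.1 ∩ H).card = (Q.1 ∩ H).card
        then v hq.choose else 0) = v Q
    rw [dif_pos hex]
    exact hvinv _ _ hex.choose_spec.1 hex.choose_spec.2
  constructor
  · intro h0
    apply hvH
    have := congrFun h0 (⟨H, hHle⟩ : Pidx n t)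
    rw [huv] at this
    simpa using this
  · have : u = v := funext huv
    rw [this]
    exact hveig
end

section
/- Let n ≥ 1 and 0 ≤ h ≤ t ≤ n be integers, let H = {1, ..., h} ⊆ N, let α_{i,j} (0 ≤ i ≤ t, 0 ≤ j ≤ min(h,i)) be real coefficients, and let u = Σ_{i=0}^{t} Σ_{j=0}^{min(h,i)} α_{i,j} · b_{i,j} ∈ ℝ^{P_t(N)}, where b_{i,j} is the 0/1 vector with [b_{i,j}]_Q = 1 if and only if |Q| = i and |Q ∩ H| = j. Then for every k ∈ {0, ..., n}: Σ_{I ⊆ N, |I| = k} (u^⊤ Z_I)² = C(n,k) · G_h(k) / n^{(h)}, where n^{(h)} = n(n−1)⋯(n−h+1). -/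
/-- Falling factorial `x^{(m)} = x(x-1)⋯(x-m+1)`. -/
noncomputable def fallFac (x : ℝ) (m : ℕ) : ℝ := ∏ i ∈ Finset.range m, (x - (i : ℝ))

/-- Generalized binomial coefficient `C(x,i) = x(x-1)⋯(x-i+1)/i!`. -/
noncomputable def genBinom (x : ℝ) (i : ℕ) : ℝ := fallFac x i / (i.factorial : ℝ)

/-- `p_j(x) = Σ_{i=0}^{t-j} α_{i+j,j} C(x,i)`. -/
noncomputable def pFun (α : ℕ → ℕ → ℝ) (t j : ℕ) (x : ℝ) : ℝ :=
  ∑ i ∈ Finset.range (t - j + 1), α (i + j) j * genBinom x i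

/-- `G_h(k) = Σ_{r=0}^h C(h,r) h_r(k) (Σ_{j=0}^h C(r,j) p_j(k-r))²` with
`h_r(k) = k^{(r)} (n-k)^{(h-r)}`. -/
noncomputable def Gfun (n t h : ℕ) (α : ℕ → ℕ → ℝ) (k : ℝ) : ℝ :=
  ∑ r ∈ Finset.range (h + 1),
    (h.choose r : ℝ) * (fallFac k r * fallFac ((n : ℝ) - k) (h - r)) *
      (∑ j ∈ Finset.range (h + 1), (r.choose j : ℝ) * pFun α t j (k - (r : ℝ))) ^ 2

/- ## Auxiliary lemmas -/

lemma fallFac_natCast (m r : ℕ) : fallFac (m : ℝ) r = (m.descFactorial r : ℝ) := by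
  unfold fallFac
  induction r with
  | zero => simp
  | succ r ih =>
    rw [Finset.prod_range_succ, ih, Nat.descFactorial_succ]
    rcases le_or_gt r m with hrm | hmr
    · push_cast [Nat.cast_sub hrm]; ring
    · rw [Nat.descFactorial_of_lt hmr]; simp

lemma genBinom_natCast (m i : ℕ) : genBinom (m : ℝ) i = (m.choose i : ℝ) := by
  unfold genBinom
  rw [fallFac_natCast, Nat.descFactorial_eq_factorial_mul_choose]
  push_cast
  rw [mul_comm, mul_div_assoc, div_self (Nat.cast_ne_zero.2 (Nat.factorial_ne_zero i)), mul_one]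

lemma cast_descFac (m r : ℕ) (h : r ≤ m) :
    (m.descFactorial r : ℝ) = (m.factorial : ℝ) / ((m - r).factorial : ℝ) := by
  rw [← Nat.factorial_mul_descFactorial h]
  push_cast
  field_simp

lemma keyIdent (n k h a : ℕ) (hk : k ≤ n) (hh : h ≤ n) (ha : a ≤ h) (hak : a ≤ k) :
    ((n - h).choose (k - a) : ℝ) * (n.descFactorial h : ℝ)
      = (n.choose k : ℝ) * (k.descFactorial a : ℝ) * ((n - k).descFactorial (h - a) : ℝ) := by
  rcases le_or_gt (k - a) (n - h) with hc | hc
  · have e1 : (n - h) - (k - a) = (n - k) - (h - a) := by omega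
    have hha : h - a ≤ n - k := by omega
    rw [Nat.cast_choose ℝ hc, Nat.cast_choose ℝ hk, cast_descFac _ _ hh, cast_descFac _ _ hak,
      cast_descFac _ _ hha, e1]
    have f1 : ((n - h).factorial : ℝ) ≠ 0 := Nat.cast_ne_zero.2 (Nat.factorial_ne_zero _)
    have f2 : ((k - a).factorial : ℝ) ≠ 0 := Nat.cast_ne_zero.2 (Nat.factorial_ne_zero _)
    have f3 : (((n - k) - (h - a)).factorial : ℝ) ≠ 0 := Nat.cast_ne_zero.2 (Nat.factorial_ne_zero _)
    have f4 : (k.factorial : ℝ) ≠ 0 := Nat.cast_ne_zero.2 (Nat.factorial_ne_zero _)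
    have f5 : ((n - k).factorial : ℝ) ≠ 0 := Nat.cast_ne_zero.2 (Nat.factorial_ne_zero _)
    field_simp
  · rw [Nat.choose_eq_zero_of_lt hc,
      Nat.descFactorial_eq_zero_iff_lt.2 (show n - k < h - a by omega)]
    ring

lemma count_lemma {X : Type*} [DecidableEq X] (S T : Finset X) (hT : T ⊆ S) (i j : ℕ)
    (hji : j ≤ i) :
    ((S.powersetCard i).filter (fun Q => (Q ∩ T).card = j)).card
      = T.card.choose j * (S \ T).card.choose (i - j) := by
  rw [← Finset.card_powersetCard, ← Finset.card_powersetCard, ← Finset.card_product]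
  apply Finset.card_bij' (fun Q _ => (Q ∩ T, Q \ T)) (fun p _ => p.1 ∪ p.2)
  · intro Q hQ
    simp only [Finset.mem_filter, Finset.mem_powersetCard] at hQ
    obtain ⟨⟨hQS, hQc⟩, hQj⟩ := hQ
    simp only [Finset.mem_product, Finset.mem_powersetCard]
    refine ⟨⟨Finset.inter_subset_right, hQj⟩, Finset.sdiff_subset_sdiff hQS le_rfl, ?_⟩
    have := Finset.card_inter_add_card_sdiff Q T
    omega
  · intro p hp
    simp only [Finset.mem_product, Finset.mem_powersetCard] at hp
    obtain ⟨⟨h1T, h1c⟩, h2T, h2c⟩ := hp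
    have h2T' : ∀ x ∈ p.2, x ∈ S ∧ x ∉ T := fun x hx => Finset.mem_sdiff.1 (h2T hx)
    have hd : Disjoint p.1 p.2 := by
      rw [Finset.disjoint_left]; intro x hx1 hx2; exact (h2T' x hx2).2 (h1T hx1)
    have hinter : (p.1 ∪ p.2) ∩ T = p.1 := by
      ext x
      simp only [Finset.mem_inter, Finset.mem_union]
      constructor
      · rintro ⟨hx | hx, hxT⟩
        · exact hx
        · exact absurd hxT (h2T' x hx).2
      · intro hx; exact ⟨Or.inl hx, h1T hx⟩
    simp only [Finset.mem_filter, Finset.mem_powersetCard]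
    refine ⟨⟨Finset.union_subset (h1T.trans hT) (h2T.trans Finset.sdiff_subset), ?_⟩, ?_⟩
    · rw [Finset.card_union_of_disjoint hd]; omega
    · rw [hinter, h1c]
  · intro Q hQ
    ext x; simp only [Finset.mem_union, Finset.mem_inter, Finset.mem_sdiff]; tauto
  · intro p hp
    simp only [Finset.mem_product, Finset.mem_powersetCard] at hp
    obtain ⟨⟨h1T, h1c⟩, h2T, h2c⟩ := hp
    have h2T' : ∀ x ∈ p.2, x ∉ T := fun x hx => (Finset.mem_sdiff.1 (h2T hx)).2
    have e1 : (p.1 ∪ p.2) ∩ T = p.1 := by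
      ext x
      simp only [Finset.mem_inter, Finset.mem_union]
      constructor
      · rintro ⟨hx | hx, hxT⟩
        · exact hx
        · exact absurd hxT (h2T' x hx)
      · intro hx; exact ⟨Or.inl hx, h1T hx⟩
    have e2 : (p.1 ∪ p.2) \ T = p.2 := by
      ext x
      simp only [Finset.mem_sdiff, Finset.mem_union]
      constructor
      · rintro ⟨hx | hx, hxT⟩
        · exact absurd (h1T hx) hxT
        · exact hx
      · intro hx; exact ⟨Or.inr hx, h2T' x hx⟩
    exact Prod.ext e1 e2

lemma sum_swap_lemma (t h : ℕ) (hht : h ≤ t) (α : ℕ → ℕ → ℝ) (γ β : ℕ → ℝ) :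
    ∑ i ∈ Finset.range (t + 1), ∑ j ∈ Finset.range (min h i + 1), α i j * (γ j * β (i - j))
    = ∑ j ∈ Finset.range (h + 1), γ j * ∑ i' ∈ Finset.range (t - j + 1), α (i' + j) j * β i' := by
  have step1 : ∀ i ∈ Finset.range (t + 1),
      ∑ j ∈ Finset.range (min h i + 1), α i j * (γ j * β (i - j))
      = ∑ j ∈ Finset.range (h + 1), if j ≤ i then α i j * (γ j * β (i - j)) else 0 := by
    intro i _
    rw [← Finset.sum_filter]
    apply Finset.sum_congr
    · ext j; simp only [Finset.mem_filter, Finset.mem_range]; omega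
    · intros; rfl
  rw [Finset.sum_congr rfl step1, Finset.sum_comm]
  apply Finset.sum_congr rfl
  intro j hj
  have hjh : j ≤ h := by simpa [Nat.lt_succ_iff] using hj
  have hjt : j ≤ t := hjh.trans hht
  rw [← Finset.sum_filter]
  have hfil : (Finset.range (t + 1)).filter (fun i => j ≤ i) = Finset.Ico j (t + 1) := by
    ext i; simp only [Finset.mem_filter, Finset.mem_range, Finset.mem_Ico]; omega
  rw [hfil, Finset.sum_Ico_eq_sum_range]
  have ht1 : t + 1 - j = t - j + 1 := by omega
  rw [ht1, Finset.mul_sum]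
  apply Finset.sum_congr rfl
  intro i' _
  have hsub : j + i' - j = i' := by omega
  rw [hsub, add_comm j i']
  ring

/-- for a structured vector `u = Σ_{i,j} α_{i,j} b_{i,j}` with
`H = {1,...,h}`, one has `Σ_{|I|=k} (u^⊤ Z_I)² = C(n,k) G_h(k) / n^{(h)}`. -/
theorem stmt15 (n t h : ℕ) (hn : 1 ≤ n) (hht : h ≤ t) (htn : t ≤ n)
    (α : ℕ → ℕ → ℝ) (u : Pidx n t → ℝ)
    (hu : ∀ Q : Pidx n t, u Q =
      ∑ i ∈ Finset.range (t + 1), ∑ j ∈ Finset.range (min h i + 1),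
        α i j * (if Q.1.card = i ∧
          (Q.1 ∩ Finset.univ.filter (fun x : Fin n => (x : ℕ) < h)).card = j
          then 1 else 0)) :
    ∀ k : ℕ, k ≤ n →
      ∑ I ∈ Finset.univ.filter (fun I : Finset (Fin n) => I.card = k),
        (∑ J : Pidx n t, u J * zeta n t I J) ^ 2
      = (n.choose k : ℝ) * Gfun n t h α (k : ℝ) / fallFac (n : ℝ) h := by
  intro k hk
  have hhn : h ≤ n := hht.trans htn
  set H : Finset (Fin n) := Finset.univ.filter (fun x : Fin n => (x : ℕ) < h) with hHdef
  -- card of H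
  have hHcard : H.card = h := by
    have : H = (Finset.range h).attachFin
        (fun m hm => lt_of_lt_of_le (Finset.mem_range.1 hm) hhn) := by
      ext x
      simp [hHdef, Finset.mem_attachFin]
    rw [this, Finset.card_attachFin, Finset.card_range]
  -- the value of the inner sum, as a function of a = |I ∩ H|
  set F : ℕ → ℝ := fun a => ∑ i ∈ Finset.range (t + 1), ∑ j ∈ Finset.range (min h i + 1),
    α i j * (((a.choose j) * ((k - a).choose (i - j)) : ℕ) : ℝ) with hFdef
  -- Step 1 : inner sum = F (|I ∩ H|)
  have key1 : ∀ I : Finset (Fin n), I.card = k →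
      (∑ J : Pidx n t, u J * zeta n t I J) = F ((I ∩ H).card) := by
    intro I hIk
    have hconv : (∑ J : Pidx n t, u J * zeta n t I J)
        = ∑ S ∈ Finset.univ.filter (fun S : Finset (Fin n) => S.card ≤ t),
            (∑ i ∈ Finset.range (t + 1), ∑ j ∈ Finset.range (min h i + 1),
              α i j * (if S.card = i ∧ (S ∩ H).card = j then (1 : ℝ) else 0)) *
            (if S ⊆ I then (1 : ℝ) else 0) := by
      rw [Finset.sum_subtype (p := fun S : Finset (Fin n) => S.card ≤ t)
        (Finset.univ.filter fun S : Finset (Fin n) => S.card ≤ t)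
        (fun S => by simp) (fun S => (∑ i ∈ Finset.range (t + 1), ∑ j ∈ Finset.range (min h i + 1),
              α i j * (if S.card = i ∧ (S ∩ H).card = j then (1 : ℝ) else 0)) *
            (if S ⊆ I then (1 : ℝ) else 0))]
      apply Finset.sum_congr rfl
      intro J _
      rw [hu J]
      simp only [zeta]
    rw [hconv]
    -- distribute the indicator over the double sum
    simp_rw [Finset.sum_mul]
    rw [Finset.sum_comm]
    rw [hFdef]
    apply Finset.sum_congr rfl
    intro i hi
    rw [Finset.sum_comm]
    apply Finset.sum_congr rfl
    intro j hj
    have hit : i ≤ t := by simpa [Nat.lt_succ_iff] using hi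
    have hji : j ≤ i := le_trans (by simpa [Nat.lt_succ_iff] using hj) (min_le_right h i)
    -- turn the sum of indicators into a cardinality
    have htrans : ∀ S : Finset (Fin n),
        (α i j * (if S.card = i ∧ (S ∩ H).card = j then (1 : ℝ) else 0)) *
          (if S ⊆ I then (1 : ℝ) else 0)
        = if S ⊆ I ∧ S.card = i ∧ (S ∩ H).card = j then α i j else 0 := by
      intro S
      by_cases h1 : S.card = i ∧ (S ∩ H).card = j <;> by_cases h2 : S ⊆ I <;>
        simp [h1, h2]
    rw [Finset.sum_congr rfl (fun S _ => htrans S), ← Finset.sum_filter]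
    have hset : (Finset.univ.filter (fun S : Finset (Fin n) => S.card ≤ t)).filter
          (fun S => S ⊆ I ∧ S.card = i ∧ (S ∩ H).card = j)
        = (I.powersetCard i).filter (fun Q => (Q ∩ (I ∩ H)).card = j) := by
      ext S
      simp only [Finset.mem_filter, Finset.mem_univ, true_and, Finset.mem_powersetCard]
      constructor
      · rintro ⟨-, hSI, hSc, hSH⟩
        refine ⟨⟨hSI, hSc⟩, ?_⟩
        have : S ∩ (I ∩ H) = S ∩ H := by
          ext x
          simp only [Finset.mem_inter]
          exact ⟨fun ⟨h1, _, h3⟩ => ⟨h1, h3⟩, fun ⟨h1, h3⟩ => ⟨h1, hSI h1, h3⟩⟩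
        rw [this]; exact hSH
      · rintro ⟨⟨hSI, hSc⟩, hSH⟩
        have : S ∩ (I ∩ H) = S ∩ H := by
          ext x
          simp only [Finset.mem_inter]
          exact ⟨fun ⟨h1, _, h3⟩ => ⟨h1, h3⟩, fun ⟨h1, h3⟩ => ⟨h1, hSI h1, h3⟩⟩
        exact ⟨hSc ▸ hit, hSI, hSc, by rw [← this]; exact hSH⟩
    rw [hset, Finset.sum_const,
      count_lemma I (I ∩ H) Finset.inter_subset_left i j hji]
    have hsd : I \ (I ∩ H) = I \ H := by
      ext x; simp only [Finset.mem_sdiff, Finset.mem_inter]; tauto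
    have hcard : (I \ (I ∩ H)).card = k - (I ∩ H).card := by
      rw [hsd]
      have := Finset.card_inter_add_card_sdiff I H
      omega
    rw [hcard, nsmul_eq_mul, mul_comm]
  -- Step 2 : group the outer sum by a = |I ∩ H|
  have hgroup : ∑ I ∈ Finset.univ.filter (fun I : Finset (Fin n) => I.card = k),
      (∑ J : Pidx n t, u J * zeta n t I J) ^ 2
      = ∑ a ∈ Finset.range (h + 1),
          ∑ I ∈ (Finset.univ.filter (fun I : Finset (Fin n) => I.card = k)).filter
              (fun I => (I ∩ H).card = a),
            F ((I ∩ H).card) ^ 2 := by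
    rw [Finset.sum_fiberwise_of_maps_to (fun I _ => Finset.mem_range.2
      (Nat.lt_succ_of_le (hHcard ▸ Finset.card_le_card Finset.inter_subset_right)))]
    apply Finset.sum_congr rfl
    intro I hI
    rw [key1 I (by simpa using hI)]
  rw [hgroup]
  -- RHS as a sum
  rw [Gfun, Finset.mul_sum, Finset.sum_div]
  apply Finset.sum_congr rfl
  intro a ha
  have hah : a ≤ h := by simpa [Nat.lt_succ_iff] using ha
  have hne : fallFac (n : ℝ) h ≠ 0 := by
    rw [fallFac_natCast]
    exact Nat.cast_ne_zero.2 (fun hz => absurd (Nat.descFactorial_eq_zero_iff_lt.1 hz)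
      (not_lt.2 hhn))
  rcases le_or_gt a k with hak | hak
  · -- main case a ≤ k
    -- fiber cardinality
    have hfibset : (Finset.univ.filter (fun I : Finset (Fin n) => I.card = k)).filter
          (fun I => (I ∩ H).card = a)
        = ((Finset.univ : Finset (Fin n)).powersetCard k).filter
            (fun Q => (Q ∩ H).card = a) := by
      ext I
      simp only [Finset.mem_filter, Finset.mem_univ, true_and, Finset.mem_powersetCard,
        Finset.subset_univ, true_and]
    have hfibcard : (((Finset.univ : Finset (Fin n)).powersetCard k).filter
          (fun Q => (Q ∩ H).card = a)).card = h.choose a * (n - h).choose (k - a) := by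
      rw [count_lemma Finset.univ H (Finset.subset_univ H) k a hak, hHcard,
        Finset.card_sdiff_of_subset (Finset.subset_univ H), Finset.card_univ, Fintype.card_fin, hHcard]
    -- inner sum over the fiber
    have hinner : ∑ I ∈ (Finset.univ.filter (fun I : Finset (Fin n) => I.card = k)).filter
          (fun I => (I ∩ H).card = a), F ((I ∩ H).card) ^ 2
        = ((h.choose a * (n - h).choose (k - a) : ℕ) : ℝ) * F a ^ 2 := by
      rw [Finset.sum_congr rfl (fun I hI => by
        rw [(Finset.mem_filter.1 hI).2]), Finset.sum_const, hfibset, hfibcard, nsmul_eq_mul]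
    rw [hinner]
    -- rewrite F a in terms of pFun
    have hcast : ((k : ℝ) - (a : ℝ)) = ((k - a : ℕ) : ℝ) := by
      push_cast [Nat.cast_sub hak]; ring
    have hFa : F a = ∑ j ∈ Finset.range (h + 1),
        (a.choose j : ℝ) * pFun α t j ((k : ℝ) - (a : ℝ)) := by
      rw [hFdef]
      have hs := sum_swap_lemma t h hht α (fun j => (a.choose j : ℝ))
        (fun i' => ((k - a).choose i' : ℝ))
      rw [show (fun a_1 => ∑ i ∈ Finset.range (t + 1), ∑ j ∈ Finset.range (min h i + 1),
          α i j * (((a_1.choose j) * ((k - a_1).choose (i - j)) : ℕ) : ℝ)) a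
        = ∑ i ∈ Finset.range (t + 1), ∑ j ∈ Finset.range (min h i + 1),
          α i j * ((a.choose j : ℝ) * (((k - a).choose (i - j) : ℕ) : ℝ)) from by
        push_cast; rfl]
      rw [hs]
      apply Finset.sum_congr rfl
      intro j _
      congr 1
      unfold pFun
      apply Finset.sum_congr rfl
      intro i' _
      rw [hcast, genBinom_natCast]
    rw [hFa]
    -- the scalar identity
    have hscal : ((h.choose a : ℝ) * ((n - h).choose (k - a) : ℝ)) * fallFac (n : ℝ) h
        = (n.choose k : ℝ) *
            ((h.choose a : ℝ) * (fallFac (k : ℝ) a * fallFac ((n : ℝ) - k) (h - a))) := by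
      rw [fallFac_natCast, fallFac_natCast, show ((n : ℝ) - k) = ((n - k : ℕ) : ℝ) from by
        push_cast [Nat.cast_sub hk]; ring, fallFac_natCast]
      have hki := keyIdent n k h a hk hhn hah hak
      linear_combination (h.choose a : ℝ) * hki
    rw [eq_div_iff hne]
    push_cast
    linear_combination (∑ j ∈ Finset.range (h + 1),
      (a.choose j : ℝ) * pFun α t j ((k : ℝ) - (a : ℝ))) ^ 2 * hscal
  · -- degenerate case a > k : both sides vanish
    have hfib : (Finset.univ.filter (fun I : Finset (Fin n) => I.card = k)).filter
          (fun I => (I ∩ H).card = a) = ∅ := by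
      apply Finset.filter_eq_empty_iff.2
      intro I hI
      have hIk : I.card = k := by simpa using hI
      have : (I ∩ H).card ≤ k := hIk ▸ Finset.card_le_card Finset.inter_subset_left
      omega
    rw [hfib, Finset.sum_empty]
    rw [fallFac_natCast, Nat.descFactorial_eq_zero_iff_lt.2 hak]
    simp
end

section
/- Let n ≥ 1 and 0 ≤ h ≤ t be integers and let α_{i,j} (0 ≤ i ≤ t, 0 ≤ j ≤ min(h,i)) be real coefficients. Then G_h, viewed as a univariate real polynomial in k, has degree at most 2t. -/
open Finset Polynomial

lemma fallFac_eq_eval (x : ℝ) (m : ℕ) : fallFac x m = (descPochhammer ℝ m).eval x := by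
  induction m with
  | zero => simp [fallFac]
  | succ m ih =>
    rw [fallFac, Finset.prod_range_succ, ← fallFac, ih, descPochhammer_succ_right]
    simp

lemma fallFac_succ_left (x : ℝ) (m : ℕ) : fallFac x (m + 1) = x * fallFac (x - 1) m := by
  unfold fallFac
  rw [Finset.prod_range_succ']
  simp only [Nat.cast_add, Nat.cast_one, Nat.cast_zero, sub_zero]
  rw [mul_comm]
  congr 1
  exact Finset.prod_congr rfl (fun i _ => by ring)

lemma fallFac_add (x : ℝ) (a b : ℕ) :
    fallFac x (a + b) = fallFac x a * fallFac (x - a) b := by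
  unfold fallFac
  rw [Finset.prod_range_add]
  congr 1
  exact Finset.prod_congr rfl (fun i _ => by push_cast; ring)

lemma fallFac_nat (r m : ℕ) : fallFac (r : ℝ) m = (r.descFactorial m : ℝ) := by
  rw [fallFac_eq_eval, descPochhammer_eval_eq_descFactorial]

lemma fallFac_nat_zero {r m : ℕ} (h : r < m) : fallFac (r : ℝ) m = 0 := by
  rw [fallFac_nat, Nat.descFactorial_eq_zero_iff_lt.2 h, Nat.cast_zero]

lemma vandermonde (N : ℕ) (x y : ℝ) :
    ∑ s ∈ Finset.range (N + 1), (N.choose s : ℝ) * (fallFac x s * fallFac y (N - s))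
      = fallFac (x + y) N := by
  induction N generalizing x y with
  | zero => simp [fallFac]
  | succ N ih =>
    rw [Finset.sum_range_succ']
    have key : ∀ s ∈ Finset.range (N + 1),
        ((N + 1).choose (s + 1) : ℝ) * (fallFac x (s + 1) * fallFac y (N + 1 - (s + 1)))
          = (N.choose s : ℝ) * (x * (fallFac (x - 1) s * fallFac y (N - s)))
            + (N.choose (s + 1) : ℝ) * (fallFac x (s + 1) * fallFac y (N - s)) := by
      intro s _
      have h1 : ((N + 1).choose (s + 1) : ℝ) = (N.choose s : ℝ) + (N.choose (s + 1) : ℝ) := by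
        rw [Nat.choose_succ_succ]; push_cast; ring
      have h2 : N + 1 - (s + 1) = N - s := by omega
      rw [h1, h2, fallFac_succ_left x s]
      ring
    rw [Finset.sum_congr rfl key, Finset.sum_add_distrib]
    have e1 : ∑ s ∈ Finset.range (N + 1),
        (N.choose s : ℝ) * (x * (fallFac (x - 1) s * fallFac y (N - s)))
          = x * fallFac (x - 1 + y) N := by
      rw [← ih (x - 1) y, Finset.mul_sum]
      exact Finset.sum_congr rfl (fun s _ => by ring)
    -- second sum: T = ∑ s∈range(N+1), C(N,s+1) ff x (s+1) ff y (N-s)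
    have e2 : (∑ s ∈ Finset.range (N + 1),
          (N.choose (s + 1) : ℝ) * (fallFac x (s + 1) * fallFac y (N - s)))
          + ((N + 1).choose 0 : ℝ) * (fallFac x 0 * fallFac y (N + 1 - 0))
        = y * fallFac (x + (y - 1)) N := by
      have T' : ∑ s ∈ Finset.range (N + 1),
          (N.choose s : ℝ) * (fallFac x s * fallFac y (N + 1 - s))
            = y * fallFac (x + (y - 1)) N := by
        rw [← ih x (y - 1), Finset.mul_sum]
        refine Finset.sum_congr rfl (fun s hs => ?_)
        have hsN : s ≤ N := by simpa [Nat.lt_succ_iff] using hs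
        have h3 : N + 1 - s = (N - s) + 1 := by omega
        rw [h3, fallFac_succ_left y (N - s)]
        ring
      rw [← T']
      rw [Finset.sum_range_succ' (fun s => (N.choose s : ℝ) * (fallFac x s * fallFac y (N + 1 - s))) N]
      have h4 : ∀ s ∈ Finset.range N, N + 1 - (s + 1) = N - s := fun s _ => by omega
      rw [Finset.sum_range_succ]
      simp only [Nat.choose_succ_self, Nat.cast_zero, zero_mul, add_zero]
      congr 1
      · exact Finset.sum_congr rfl (fun s hs => by rw [h4 s hs])
      · simp
    rw [e1, add_assoc, e2]
    have : x + (y - 1) = x - 1 + y := by ring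
    rw [this, fallFac_succ_left (x + y) N]
    have : x + y - 1 = x - 1 + y := by ring
    rw [this]
    ring

lemma keyB (h a m : ℕ) (y k : ℝ) :
    ∑ r ∈ Finset.range (h + 1),
        (h.choose r : ℝ) * fallFac (r : ℝ) a *
          (fallFac k r * fallFac (y - k) (h - r)) * fallFac (k - (r : ℝ)) m
      = fallFac (h : ℝ) a * fallFac k (a + m) * fallFac (y - (a : ℝ) - (m : ℝ)) (h - a) := by
  by_cases hah : a ≤ h
  · -- restrict sum to r ≥ a
    have hsub : Finset.Ico a (h + 1) ⊆ Finset.range (h + 1) := by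
      intro r hr; simp at hr ⊢; omega
    rw [← Finset.sum_subset hsub (by
      intro r hr hr'
      simp only [Finset.mem_range, Finset.mem_Ico, not_and, not_le] at hr hr'
      have : r < a := by omega
      rw [fallFac_nat_zero this]
      ring)]
    rw [Finset.sum_Ico_eq_sum_range]
    have hlen : h + 1 - a = h - a + 1 := by omega
    rw [hlen]
    have term : ∀ s ∈ Finset.range (h - a + 1),
        (h.choose (a + s) : ℝ) * fallFac ((a + s : ℕ) : ℝ) a *
            (fallFac k (a + s) * fallFac (y - k) (h - (a + s))) * fallFac (k - ((a + s : ℕ) : ℝ)) m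
          = (fallFac (h : ℝ) a * fallFac k (a + m)) *
              (((h - a).choose s : ℝ) *
                (fallFac (k - (a : ℝ) - (m : ℝ)) s * fallFac (y - k) ((h - a) - s))) := by
      intro s hs
      have hsle : s ≤ h - a := by simpa [Nat.lt_succ_iff] using hs
      -- choose identity
      have hc : (h.choose (a + s) : ℝ) * fallFac ((a + s : ℕ) : ℝ) a
          = fallFac (h : ℝ) a * ((h - a).choose s : ℝ) := by
        rw [fallFac_nat, fallFac_nat]
        have hnat : h.choose (a + s) * (a + s).descFactorial a
            = h.descFactorial a * (h - a).choose s := by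
          rw [Nat.descFactorial_eq_factorial_mul_choose, Nat.descFactorial_eq_factorial_mul_choose]
          have := Nat.choose_mul (n := h) (k := a + s) (s := a) (by omega)
          rw [Nat.add_sub_cancel_left] at this
          calc h.choose (a + s) * (a.factorial * (a + s).choose a)
              = a.factorial * (h.choose (a + s) * (a + s).choose a) := by ring
            _ = a.factorial * (h.choose a * (h - a).choose s) := by rw [this]
            _ = a.factorial * h.choose a * (h - a).choose s := by ring
        exact_mod_cast hnat
      -- falling factorial recombination
      have hff : fallFac k (a + s) * fallFac (k - ((a + s : ℕ) : ℝ)) m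
          = fallFac k (a + m) * fallFac (k - (a : ℝ) - (m : ℝ)) s := by
        have e1 : fallFac k ((a + s) + m) = fallFac k (a + s) * fallFac (k - ((a + s : ℕ) : ℝ)) m := by
          rw [fallFac_add k (a + s) m]
        have e2 : fallFac k ((a + m) + s) = fallFac k (a + m) * fallFac (k - ((a + m : ℕ) : ℝ)) s := by
          rw [fallFac_add k (a + m) s]
        have e3 : (a + s) + m = (a + m) + s := by omega
        rw [← e1, e3, e2]
        push_cast
        ring_nf
      have hsub2 : h - (a + s) = (h - a) - s := by omega
      rw [hsub2]
      calc (h.choose (a + s) : ℝ) * fallFac ((a + s : ℕ) : ℝ) a *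
            (fallFac k (a + s) * fallFac (y - k) ((h - a) - s)) * fallFac (k - ((a + s : ℕ) : ℝ)) m
          = ((h.choose (a + s) : ℝ) * fallFac ((a + s : ℕ) : ℝ) a) *
              (fallFac k (a + s) * fallFac (k - ((a + s : ℕ) : ℝ)) m) * fallFac (y - k) ((h - a) - s) := by
            ring
        _ = (fallFac (h : ℝ) a * ((h - a).choose s : ℝ)) *
              (fallFac k (a + m) * fallFac (k - (a : ℝ) - (m : ℝ)) s) * fallFac (y - k) ((h - a) - s) := by
            rw [hc, hff]
        _ = _ := by ring
    rw [Finset.sum_congr rfl term, ← Finset.mul_sum, vandermonde (h - a) (k - (a : ℝ) - (m : ℝ)) (y - k)]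
    have : k - (a : ℝ) - (m : ℝ) + (y - k) = y - (a : ℝ) - (m : ℝ) := by ring
    rw [this]
  · -- a > h : both sides vanish
    have hR : fallFac (h : ℝ) a = 0 := fallFac_nat_zero (by omega)
    rw [hR, zero_mul, zero_mul]
    refine Finset.sum_eq_zero (fun r hr => ?_)
    have : r < a := by simp at hr; omega
    rw [fallFac_nat_zero this]
    ring

lemma expandDesc : ∀ (d : ℕ) (u : Polynomial ℝ), u.natDegree ≤ d →
    ∃ c : ℕ → ℝ, u = ∑ a ∈ Finset.range (d + 1), Polynomial.C (c a) * descPochhammer ℝ a := by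
  intro d
  induction d with
  | zero =>
    intro u hu
    refine ⟨fun _ => u.coeff 0, ?_⟩
    have := Polynomial.eq_C_of_natDegree_le_zero hu
    rw [this]
    simp
  | succ d ih =>
    intro u hu
    set w := u - Polynomial.C (u.coeff (d + 1)) * descPochhammer ℝ (d + 1) with hw
    have hwd : w.natDegree ≤ d := by
      rw [Polynomial.natDegree_le_iff_coeff_eq_zero]
      intro N hN
      have hd1 : (Polynomial.C (u.coeff (d + 1)) * descPochhammer ℝ (d + 1)).natDegree ≤ d + 1 := by
        refine le_trans (Polynomial.natDegree_mul_le) ?_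
        simp [descPochhammer_natDegree]
      rcases eq_or_lt_of_le (Nat.succ_le_of_lt hN) with hEq | hLt
      · -- N = d+1
        have hNe : N = d + 1 := hEq.symm
        subst hNe
        rw [hw, Polynomial.coeff_sub, Polynomial.coeff_C_mul]
        have : (descPochhammer ℝ (d + 1)).coeff (d + 1) = 1 := by
          have hm := monic_descPochhammer ℝ (d + 1)
          have := hm.coeff_natDegree
          rwa [descPochhammer_natDegree] at this
        rw [this, mul_one, sub_self]
      · -- N > d+1
        rw [hw, Polynomial.coeff_sub,
          Polynomial.coeff_eq_zero_of_natDegree_lt (lt_of_le_of_lt hu hLt),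
          Polynomial.coeff_eq_zero_of_natDegree_lt (lt_of_le_of_lt hd1 hLt), sub_self]
    obtain ⟨c, hc⟩ := ih w hwd
    refine ⟨fun a => if a = d + 1 then u.coeff (d + 1) else c a, ?_⟩
    rw [Finset.sum_range_succ]
    have : ∑ a ∈ Finset.range (d + 1),
        Polynomial.C (if a = d + 1 then u.coeff (d + 1) else c a) * descPochhammer ℝ a
        = ∑ a ∈ Finset.range (d + 1), Polynomial.C (c a) * descPochhammer ℝ a := by
      refine Finset.sum_congr rfl (fun a ha => ?_)
      have : a ≠ d + 1 := by simp at ha; omega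
      simp [this]
    rw [this, ← hc]
    simp [hw]

lemma keyC (h du dv : ℕ) (y : ℝ) (u v : Polynomial ℝ)
    (hu : u.natDegree ≤ du) (hv : v.natDegree ≤ dv) :
    ∃ q : Polynomial ℝ, q.natDegree ≤ du + dv ∧ ∀ k : ℝ,
      ∑ r ∈ Finset.range (h + 1),
        (h.choose r : ℝ) * (fallFac k r * fallFac (y - k) (h - r)) *
          (u.eval (r : ℝ) * v.eval (k - (r : ℝ))) = q.eval k := by
  obtain ⟨c, hc⟩ := expandDesc du u hu
  obtain ⟨e, he⟩ := expandDesc dv v hv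
  refine ⟨∑ a ∈ Finset.range (du + 1), ∑ b ∈ Finset.range (dv + 1),
      Polynomial.C (c a * e b * fallFac (h : ℝ) a * fallFac (y - (a : ℝ) - (b : ℝ)) (h - a)) *
        descPochhammer ℝ (a + b), ?_, ?_⟩
  · refine Polynomial.natDegree_sum_le_of_forall_le _ _ (fun a ha => ?_)
    refine Polynomial.natDegree_sum_le_of_forall_le _ _ (fun b hb => ?_)
    refine le_trans (Polynomial.natDegree_mul_le) ?_
    simp only [Polynomial.natDegree_C, descPochhammer_natDegree, zero_add]
    simp at ha hb; omega
  · intro k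
    have hueval : ∀ x : ℝ, u.eval x = ∑ a ∈ Finset.range (du + 1), c a * fallFac x a := by
      intro x
      rw [hc]
      simp [Polynomial.eval_finset_sum, fallFac_eq_eval]
    have hveval : ∀ x : ℝ, v.eval x = ∑ b ∈ Finset.range (dv + 1), e b * fallFac x b := by
      intro x
      rw [he]
      simp [Polynomial.eval_finset_sum, fallFac_eq_eval]
    have step1 : ∀ r ∈ Finset.range (h + 1),
        (h.choose r : ℝ) * (fallFac k r * fallFac (y - k) (h - r)) *
            (u.eval (r : ℝ) * v.eval (k - (r : ℝ)))
          = ∑ a ∈ Finset.range (du + 1), ∑ b ∈ Finset.range (dv + 1),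
              c a * e b * ((h.choose r : ℝ) * fallFac (r : ℝ) a *
                (fallFac k r * fallFac (y - k) (h - r)) * fallFac (k - (r : ℝ)) b) := by
      intro r _
      rw [hueval, hveval, Finset.sum_mul_sum, Finset.mul_sum]
      refine Finset.sum_congr rfl (fun a _ => ?_)
      rw [Finset.mul_sum]
      refine Finset.sum_congr rfl (fun b _ => ?_)
      ring
    rw [Finset.sum_congr rfl step1, Finset.sum_comm]
    rw [Polynomial.eval_finset_sum]
    refine Finset.sum_congr rfl (fun a _ => ?_)
    rw [Finset.sum_comm, Polynomial.eval_finset_sum]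
    refine Finset.sum_congr rfl (fun b _ => ?_)
    rw [← Finset.mul_sum, keyB h a b y k]
    simp only [Polynomial.eval_mul, Polynomial.eval_C, ← fallFac_eq_eval]
    ring

/-- `G_h`, viewed as a univariate real polynomial, has degree at most
`2t` (the terms of degree exceeding `2t` cancel). -/
theorem stmt16 (n t h : ℕ) (hn : 1 ≤ n) (hht : h ≤ t) (α : ℕ → ℕ → ℝ) :
    ∃ q : Polynomial ℝ, q.natDegree ≤ 2 * t ∧ ∀ x : ℝ, Gfun n t h α x = q.eval x := by
  classical
  set P : ℕ → Polynomial ℝ := fun j => ∑ i ∈ Finset.range (t - j + 1),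
      Polynomial.C (α (i + j) j / (i.factorial : ℝ)) * descPochhammer ℝ i with hP
  set U : ℕ → Polynomial ℝ := fun j =>
      Polynomial.C ((j.factorial : ℝ))⁻¹ * descPochhammer ℝ j with hU
  have hPdeg : ∀ j, (P j).natDegree ≤ t - j := by
    intro j
    refine Polynomial.natDegree_sum_le_of_forall_le _ _ (fun i hi => ?_)
    refine le_trans Polynomial.natDegree_mul_le ?_
    simp only [Polynomial.natDegree_C, descPochhammer_natDegree, zero_add]
    simp at hi; omega
  have hUdeg : ∀ j, (U j).natDegree ≤ j := by
    intro j
    refine le_trans Polynomial.natDegree_mul_le ?_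
    simp [descPochhammer_natDegree]
  have hPeval : ∀ j (x : ℝ), (P j).eval x = pFun α t j x := by
    intro j x
    rw [hP]
    simp only [pFun, genBinom]
    rw [Polynomial.eval_finset_sum]
    refine Finset.sum_congr rfl (fun i _ => ?_)
    rw [Polynomial.eval_mul, Polynomial.eval_C, ← fallFac_eq_eval]
    ring
  have hUeval : ∀ j (r : ℕ), (U j).eval (r : ℝ) = (r.choose j : ℝ) := by
    intro j r
    rw [hU]
    rw [Polynomial.eval_mul, Polynomial.eval_C, descPochhammer_eval_eq_descFactorial,
      Nat.descFactorial_eq_factorial_mul_choose]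
    have : ((j.factorial : ℕ) : ℝ) ≠ 0 := by
      exact_mod_cast (Nat.factorial_pos j).ne'
    push_cast
    field_simp
  have ex : ∀ jj : ℕ × ℕ, ∃ q : Polynomial ℝ,
      ((jj.1 ≤ t ∧ jj.2 ≤ t) → q.natDegree ≤ 2 * t) ∧ ∀ k : ℝ,
        ∑ r ∈ Finset.range (h + 1),
          (h.choose r : ℝ) * (fallFac k r * fallFac ((n : ℝ) - k) (h - r)) *
            ((U jj.1 * U jj.2).eval (r : ℝ) * (P jj.1 * P jj.2).eval (k - (r : ℝ)))
          = q.eval k := by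
    rintro ⟨j, j'⟩
    have hu : (U j * U j').natDegree ≤ j + j' :=
      le_trans Polynomial.natDegree_mul_le (Nat.add_le_add (hUdeg j) (hUdeg j'))
    have hv : (P j * P j').natDegree ≤ (t - j) + (t - j') :=
      le_trans Polynomial.natDegree_mul_le (Nat.add_le_add (hPdeg j) (hPdeg j'))
    obtain ⟨q, hq1, hq2⟩ := keyC h (j + j') ((t - j) + (t - j')) ((n : ℝ))
      (U j * U j') (P j * P j') hu hv
    exact ⟨q, fun hjt => le_trans hq1 (by omega), hq2⟩
  choose Q hQdeg hQeval using ex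
  refine ⟨∑ j ∈ Finset.range (h + 1), ∑ j' ∈ Finset.range (h + 1), Q (j, j'), ?_, ?_⟩
  · refine Polynomial.natDegree_sum_le_of_forall_le _ _ (fun j hj => ?_)
    refine Polynomial.natDegree_sum_le_of_forall_le _ _ (fun j' hj' => ?_)
    simp only [Finset.mem_range] at hj hj'
    exact hQdeg (j, j') ⟨by omega, by omega⟩
  · intro x
    have sqexp : ∀ r ∈ Finset.range (h + 1),
        (h.choose r : ℝ) * (fallFac x r * fallFac ((n : ℝ) - x) (h - r)) *
            (∑ j ∈ Finset.range (h + 1), (r.choose j : ℝ) * pFun α t j (x - (r : ℝ))) ^ 2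
          = ∑ j ∈ Finset.range (h + 1), ∑ j' ∈ Finset.range (h + 1),
              (h.choose r : ℝ) * (fallFac x r * fallFac ((n : ℝ) - x) (h - r)) *
                ((U j * U j').eval (r : ℝ) * (P j * P j').eval (x - (r : ℝ))) := by
      intro r _
      rw [pow_two, Finset.sum_mul_sum, Finset.mul_sum]
      refine Finset.sum_congr rfl (fun j _ => ?_)
      rw [Finset.mul_sum]
      refine Finset.sum_congr rfl (fun j' _ => ?_)
      rw [Polynomial.eval_mul (p := U j) (q := U j'), Polynomial.eval_mul (p := P j) (q := P j'),
        hUeval j r, hUeval j' r, hPeval, hPeval]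
      ring
    unfold Gfun
    rw [Finset.sum_congr rfl sqexp, Finset.sum_comm, Polynomial.eval_finset_sum]
    refine Finset.sum_congr rfl (fun j _ => ?_)
    rw [Finset.sum_comm, Polynomial.eval_finset_sum]
    refine Finset.sum_congr rfl (fun j' _ => ?_)
    exact hQeval (j, j') x
end

section
/- Let n ≥ 0 and h ≥ 0 be integers and let f be a univariate real polynomial. Then the polynomial C(k) = Σ_{r=0}^{h} C(h,r) · f(r) · k^{(r)} · (n−k)^{(h−r)}, viewed as a polynomial in the variable k, has degree at most the degree of f. -/
open Polynomial Finset

noncomputable def Apoly (a : ℝ) (s : ℕ) : Polynomial ℝ :=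
  ∏ i ∈ Finset.range s, (Polynomial.X - Polynomial.C (a + i))

noncomputable def Bpoly (b : ℝ) (t : ℕ) : Polynomial ℝ :=
  ∏ i ∈ Finset.range t, (Polynomial.C b - Polynomial.X - Polynomial.C (i : ℝ))

lemma Apoly_succ' (a : ℝ) (s : ℕ) : Apoly a (s + 1) = (X - C a) * Apoly (a + 1) s := by
  rw [Apoly, Finset.prod_range_succ', Apoly, mul_comm]
  congr 1
  · congr 2; norm_num
  · refine Finset.prod_congr rfl fun i _ => ?_
    congr 2
    push_cast
    ring

lemma Bpoly_succ' (b : ℝ) (t : ℕ) : Bpoly b (t + 1) = (C b - X) * Bpoly (b - 1) t := by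
  rw [Bpoly, Finset.prod_range_succ', Bpoly, mul_comm]
  congr 1
  · norm_num
  · refine Finset.prod_congr rfl fun i _ => ?_
    simp only [Nat.cast_add, Nat.cast_one, map_add, map_sub, map_one]
    ring

lemma vandermonde_s19 (H : ℕ) : ∀ a b : ℝ,
    ∑ s ∈ Finset.range (H + 1), C ((H.choose s : ℝ)) * Apoly a s * Bpoly b (H - s)
      = C (∏ i ∈ Finset.range H, (b - a - i)) := by
  induction H with
  | zero => intro a b; simp [Apoly, Bpoly]
  | succ H IH =>
    intro a b
    rw [Finset.sum_range_succ' _ (H + 1)]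
    have h1 : ∀ s ∈ Finset.range (H + 1),
        C (((H + 1).choose (s + 1) : ℝ)) * Apoly a (s + 1) * Bpoly b (H + 1 - (s + 1))
          = C ((H.choose s : ℝ)) * ((X - C a) * Apoly (a + 1) s) * Bpoly b (H - s)
            + C ((H.choose (s + 1) : ℝ)) * Apoly a (s + 1) * Bpoly b (H - s) := by
      intro s hs
      rw [Nat.succ_sub_succ, Nat.choose_succ_succ, Apoly_succ', Nat.cast_add, map_add]
      ring
    rw [Finset.sum_congr rfl h1, Finset.sum_add_distrib]
    have h2 : ∑ s ∈ Finset.range (H + 1),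
        C ((H.choose s : ℝ)) * ((X - C a) * Apoly (a + 1) s) * Bpoly b (H - s)
          = (X - C a) * C (∏ i ∈ Finset.range H, (b - (a + 1) - i)) := by
      rw [← IH (a + 1) b, Finset.mul_sum]; exact Finset.sum_congr rfl fun s _ => by ring
    have h3 : ∑ s ∈ Finset.range (H + 1),
        C ((H.choose (s + 1) : ℝ)) * Apoly a (s + 1) * Bpoly b (H - s)
          = (∑ s ∈ Finset.range (H + 2),
              C ((H.choose s : ℝ)) * Apoly a s * Bpoly b (H + 1 - s)) - Bpoly b (H + 1) := by
      rw [Finset.sum_range_succ' _ (H + 1)]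
      simp only [Nat.choose_zero_right, Nat.cast_one, map_one, one_mul, Nat.succ_sub_succ,
        Nat.sub_zero]
      have hA0 : Apoly a 0 = 1 := by simp [Apoly]
      rw [hA0, one_mul]
      ring
    have h4 : ∑ s ∈ Finset.range (H + 2),
        C ((H.choose s : ℝ)) * Apoly a s * Bpoly b (H + 1 - s)
          = (∑ s ∈ Finset.range (H + 1),
              C ((H.choose s : ℝ)) * Apoly a s * Bpoly b (H + 1 - s)) := by
      rw [Finset.sum_range_succ, Nat.choose_succ_self]
      norm_num
    have h5 : ∑ s ∈ Finset.range (H + 1),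
        C ((H.choose s : ℝ)) * Apoly a s * Bpoly b (H + 1 - s)
          = (C b - X) * C (∏ i ∈ Finset.range H, ((b - 1) - a - i)) := by
      rw [← IH a (b - 1), Finset.mul_sum]
      refine Finset.sum_congr rfl fun s hs => ?_
      rw [Finset.mem_range] at hs
      have e : H + 1 - s = (H - s) + 1 := by omega
      rw [e, Bpoly_succ']
      ring
    rw [h2, h3, h4, h5]
    have hprod : ∀ i : ℕ, (b - (a + 1) - i : ℝ) = ((b - 1) - a - i) := fun i => by ring
    simp only [hprod, Nat.sub_zero, Nat.choose_zero_right, Nat.cast_one, map_one, one_mul]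
    have hA0 : Apoly a 0 = 1 := by simp [Apoly]
    rw [hA0, one_mul]
    have hsucc : (∏ i ∈ Finset.range (H + 1), (b - a - (i : ℝ)))
        = (b - a) * ∏ i ∈ Finset.range H, ((b - 1) - a - i) := by
      rw [Finset.prod_range_succ', mul_comm]
      congr 1
      · norm_num
      · exact Finset.prod_congr rfl fun i _ => by push_cast; ring
    rw [hsucc, map_mul]
    have : C (b - a) = C b - C a := by rw [map_sub]
    rw [this]
    ring

lemma prod_sub_cast (k m : ℕ) (h : m ≤ k) :
    ∏ i ∈ Finset.range m, ((k : ℝ) - i) = (k.descFactorial m : ℝ) := by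
  induction m with
  | zero => simp
  | succ m IH =>
    rw [Finset.prod_range_succ, IH (by omega), Nat.descFactorial_succ, Nat.cast_mul,
      Nat.cast_sub (by omega)]
    ring

lemma key_nat (h m s : ℕ) (hle : m + s ≤ h) :
    h.choose (m + s) * (m + s).descFactorial m = h.descFactorial m * (h - m).choose s := by
  rw [Nat.descFactorial_eq_factorial_mul_choose (m + s) m,
    Nat.descFactorial_eq_factorial_mul_choose h m, ← Nat.mul_assoc,
    Nat.mul_comm (h.choose (m + s)) m.factorial, Nat.mul_assoc,
    Nat.choose_mul (n := h) (Nat.le_add_right m s), Nat.add_sub_cancel_left]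
  ring

lemma Apoly_add (a : ℝ) (m s : ℕ) : Apoly a (m + s) = Apoly a m * Apoly (a + m) s := by
  rw [Apoly, Finset.prod_range_add, Apoly, Apoly]
  congr 1
  exact Finset.prod_congr rfl fun i _ => by congr 2; push_cast; ring

noncomputable def Spoly (n h : ℕ) (g : ℕ → ℝ) : Polynomial ℝ :=
  ∑ r ∈ Finset.range (h + 1),
    C ((h.choose r : ℝ) * g r) * Apoly 0 r * Bpoly (n : ℝ) (h - r)

lemma Apoly_monic (a : ℝ) (m : ℕ) : (Apoly a m).Monic :=
  monic_prod_of_monic _ _ fun i _ => monic_X_sub_C _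

lemma Apoly_natDegree (a : ℝ) (m : ℕ) : (Apoly a m).natDegree = m := by
  rw [Apoly, natDegree_prod _ _ fun i _ => X_sub_C_ne_zero _]
  rw [Finset.sum_congr rfl fun i (_ : i ∈ Finset.range m) => natDegree_X_sub_C (a + (i : ℝ))]
  simp

lemma Spoly_basis (n h m : ℕ) (hm : m ≤ h) :
    Spoly n h (fun r => ∏ i ∈ Finset.range m, ((r : ℝ) - i))
      = C ((h.descFactorial m : ℝ) * ∏ i ∈ Finset.range (h - m), ((n : ℝ) - m - i))
          * Apoly 0 m := by
  rw [Spoly, show Finset.range (h + 1) = Finset.Ico 0 (h + 1) from Finset.range_eq_Ico _,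
    ← Finset.sum_Ico_consecutive _ (Nat.zero_le m) (by omega : m ≤ h + 1)]
  have hzero : ∑ r ∈ Finset.Ico 0 m,
      C ((h.choose r : ℝ) * ∏ i ∈ Finset.range m, ((r : ℝ) - i)) * Apoly 0 r
        * Bpoly (n : ℝ) (h - r) = 0 := by
    apply Finset.sum_eq_zero
    intro r hr
    rw [Finset.mem_Ico] at hr
    have : ∏ i ∈ Finset.range m, ((r : ℝ) - i) = 0 :=
      Finset.prod_eq_zero (Finset.mem_range.2 hr.2) (by simp)
    rw [this, mul_zero, map_zero, zero_mul, zero_mul]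
  rw [hzero, zero_add, Finset.sum_Ico_eq_sum_range]
  have hlen : h + 1 - m = (h - m) + 1 := by omega
  rw [hlen]
  have hterm : ∀ s ∈ Finset.range ((h - m) + 1),
      C ((h.choose (m + s) : ℝ) * ∏ i ∈ Finset.range m, (((m + s : ℕ) : ℝ) - i))
          * Apoly 0 (m + s) * Bpoly (n : ℝ) (h - (m + s))
        = (C ((h.descFactorial m : ℝ)) * Apoly 0 m)
          * (C (((h - m).choose s : ℝ)) * Apoly (m : ℝ) s * Bpoly (n : ℝ) ((h - m) - s)) := by
    intro s hs
    rw [Finset.mem_range] at hs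
    have hms : m + s ≤ h := by omega
    rw [prod_sub_cast (m + s) m (Nat.le_add_right m s)]
    have hcast : (h.choose (m + s) : ℝ) * ((m + s).descFactorial m : ℝ)
        = (h.descFactorial m : ℝ) * ((h - m).choose s : ℝ) := by
      rw [← Nat.cast_mul, ← Nat.cast_mul, key_nat h m s hms]
    rw [hcast, Apoly_add 0 m s, zero_add]
    have he : h - (m + s) = (h - m) - s := by omega
    rw [he, map_mul]
    ring
  rw [Finset.sum_congr rfl hterm, ← Finset.mul_sum, vandermonde_s19 (h - m) (m : ℝ) (n : ℝ),
    map_mul]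
  ring

lemma Spoly_basis_deg (n h m : ℕ) :
    (Spoly n h (fun r => ∏ i ∈ Finset.range m, ((r : ℝ) - i))).natDegree ≤ m := by
  rcases le_or_gt m h with hm | hm
  · rw [Spoly_basis n h m hm]
    refine le_trans (natDegree_mul_le) ?_
    rw [natDegree_C, Apoly_natDegree]
    omega
  · have hz : Spoly n h (fun r => ∏ i ∈ Finset.range m, ((r : ℝ) - i)) = 0 := by
      rw [Spoly]
      apply Finset.sum_eq_zero
      intro r hr
      rw [Finset.mem_range] at hr
      have : ∏ i ∈ Finset.range m, ((r : ℝ) - i) = 0 :=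
        Finset.prod_eq_zero (i := r) (Finset.mem_range.2 (by omega)) (by simp)
      rw [this, mul_zero, map_zero, zero_mul, zero_mul]
    rw [hz]
    simp

lemma Spoly_zero (n h : ℕ) : Spoly n h (fun _ => 0) = 0 := by
  simp [Spoly]

lemma Spoly_add_smul (n h : ℕ) (c : ℝ) (u v : ℕ → ℝ) :
    Spoly n h (fun r => c * u r + v r) = C c * Spoly n h u + Spoly n h v := by
  rw [Spoly, Spoly, Spoly, Finset.mul_sum, ← Finset.sum_add_distrib]
  refine Finset.sum_congr rfl fun r _ => ?_
  simp only [mul_add, map_add, map_mul]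
  ring

lemma Spoly_deg (n h : ℕ) (f : Polynomial ℝ) :
    (Spoly n h (fun r => f.eval (r : ℝ))).natDegree ≤ f.natDegree := by
  generalize hd : f.natDegree = d
  induction d using Nat.strong_induction_on generalizing f with
  | _ d IH =>
    set g := f - C f.leadingCoeff * Apoly 0 d with hg
    have hsplit : Spoly n h (fun r => f.eval (r : ℝ))
        = C f.leadingCoeff * Spoly n h (fun r => ∏ i ∈ Finset.range d, ((r : ℝ) - i))
          + Spoly n h (fun r => g.eval (r : ℝ)) := by
      rw [← Spoly_add_smul]
      congr 1
      funext r
      rw [hg]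
      simp [Apoly, eval_prod]
    have hgle : g.natDegree ≤ d := by
      refine le_trans (natDegree_sub_le _ _) (max_le (le_of_eq hd) ?_)
      refine le_trans (natDegree_mul_le) ?_
      simp [Apoly_natDegree]
    rw [hsplit]
    refine le_trans (natDegree_add_le _ _) (max_le ?_ ?_)
    · refine le_trans (natDegree_mul_le) ?_
      simpa using Spoly_basis_deg n h d
    · by_cases hg0 : g = 0
      · rw [hg0]
        simp [Spoly_zero]
      · have hcd : g.coeff d = 0 := by
          rw [hg, coeff_sub, coeff_C_mul]
          have hmc : (Apoly 0 d).coeff d = 1 := by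
            have := (Apoly_monic 0 d).coeff_natDegree
            rwa [Apoly_natDegree] at this
          rw [hmc, mul_one, ← hd, ← leadingCoeff, sub_self]
        have hgd : g.natDegree < d := by
          rcases lt_or_eq_of_le hgle with h' | h'
          · exact h'
          · exfalso
            apply hg0
            rw [← leadingCoeff_eq_zero, leadingCoeff, h', hcd]
        exact le_trans (IH g.natDegree hgd g rfl) (le_of_lt hgd)

/-- the polynomial `C(k) = Σ_{r=0}^h C(h,r) f(r) k^{(r)} (n-k)^{(h-r)}`
has degree (in `k`) at most the degree of `f`. -/
theorem stmt19 (n h : ℕ) (f : Polynomial ℝ) :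
    (∑ r ∈ Finset.range (h + 1),
        Polynomial.C ((h.choose r : ℝ) * f.eval (r : ℝ)) *
          (∏ i ∈ Finset.range r, (Polynomial.X - Polynomial.C (i : ℝ))) *
          (∏ i ∈ Finset.range (h - r),
            (Polynomial.C (n : ℝ) - Polynomial.X - Polynomial.C (i : ℝ)))).natDegree
      ≤ f.natDegree := by
  have : (∑ r ∈ Finset.range (h + 1),
        Polynomial.C ((h.choose r : ℝ) * f.eval (r : ℝ)) *
          (∏ i ∈ Finset.range r, (Polynomial.X - Polynomial.C (i : ℝ))) *
          (∏ i ∈ Finset.range (h - r),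
            (Polynomial.C (n : ℝ) - Polynomial.X - Polynomial.C (i : ℝ))))
      = Spoly n h (fun r => f.eval (r : ℝ)) := by
    rw [Spoly]
    refine Finset.sum_congr rfl fun r _ => ?_
    simp [Apoly, Bpoly]
  rw [this]
  exact Spoly_deg n h f
end
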